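/- arXiv:1804.01045 — 3 statements merged into one kernel-verified Lean document; each statement's English description precedes it below -/
import Mathlib

section
/- Let C be a spanning cotree of G rooted at a face r, and define the dual flow z as follows: z(d) = 0 if the edge of d is not in C; if p↑q is the successor dart of dual vertex p in C, then z(p↑q) equals the number of descendants of p in C (including p itself), and z of its reversal is the negation of that number. Then ∂*z(q) = −1 for every face q ≠ r and ∂*z(r) = |F| − 1; in particular, z is a drainage with sink r. -/
/-!
Common combinatorial framework for graphs cellularly embedded on orientable surfaces,
following Erickson, Fox, and Lkhamsuren, "Holiest Minimum-Cost Paths and Flows in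
Surface Graphs".

A graph `G = (V, E, F)` embedded on an orientable surface is given combinatorially by a
finite set of darts together with a fixed-point-free involution `rev` (whose orbits are
the edges) and a permutation `next` (= π, whose orbits are the vertices); the faces are
the orbits of `rev ∘ next`, and the genus `g` is determined by Euler's formula
`|V| - |E| + |F| = 2 - 2g`.
-/

noncomputable section

open Finset

open scoped Classical

set_option maxHeartbeats 1000000

structure CombSurface where
  /-- the darts -/
  D : Type
  /-- the vertices (orbits of `next`) -/
  V : Type
  /-- the faces (orbits of `rev ∘ next`) -/
  F : Type
  [finD : Fintype D]
  [deqD : DecidableEq D]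
  [finV : Fintype V]
  [deqV : DecidableEq V]
  [finF : Fintype F]
  [deqF : DecidableEq F]
  /-- the reversal involution on darts; its orbits are the edges -/
  rev : D → D
  rev_invol : ∀ d, rev (rev d) = d
  rev_ne : ∀ d, rev d ≠ d
  /-- the rotation permutation π: orbits are the darts directed into a common vertex,
  in counterclockwise order -/
  next : D → D
  next_bij : Function.Bijective next
  /-- the head of a dart: the orbit map of `next` -/
  head : D → V
  head_next : ∀ d, head (next d) = head d
  head_orbit : ∀ d₁ d₂, head d₁ = head d₂ → ∃ n : ℕ, next^[n] d₁ = d₂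
  head_surj : Function.Surjective head
  /-- the face to the left of a dart: the orbit map of `rev ∘ next` -/
  left : D → F
  left_step : ∀ d, left (rev (next d)) = left d
  left_orbit : ∀ d₁ d₂, left d₁ = left d₂ → ∃ n : ℕ, (fun x => rev (next x))^[n] d₁ = d₂
  left_surj : Function.Surjective left
  /-- the genus -/
  g : ℕ
  /-- Euler's formula `|V| - |E| + |F| = 2 - 2g` (with `2|E| = |D|`) -/
  euler : 2 * (Fintype.card V : ℤ) + 2 * (Fintype.card F : ℤ) - (Fintype.card D : ℤ)
      = 4 - 4 * (g : ℤ)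

attribute [instance] CombSurface.finD CombSurface.deqD CombSurface.finV
  CombSurface.deqV CombSurface.finF CombSurface.deqF

namespace CombSurface

variable (S : CombSurface)

/-- The tail of a dart. -/
def tail (d : S.D) : S.V := S.head (S.rev d)

/-- The face to the right of a dart.  The dual dart of `d` crosses `d` from the face on
its left to the face on its right; i.e. the dual dart of `d` has tail `S.left d` and
head `S.right d`. -/
def right (d : S.D) : S.F := S.left (S.rev d)

/-- The imbalance of a flow `f` at a vertex `v`: the net flow into `v`. -/
def imbalance (f : S.D → ℝ) (v : S.V) : ℝ :=
  ∑ d ∈ univ.filter (fun d => S.head d = v), f d -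
    ∑ d ∈ univ.filter (fun d => S.tail d = v), f d

/-- `f` is the boundary flow of the potential function `α` on the faces. -/
def IsBoundary (f : S.D → ℝ) (α : S.F → ℝ) : Prop :=
  ∀ d, f d - f (S.rev d) = α (S.right d) - α (S.left d)

/-- The dual imbalance of a dual flow `z` at a face `p`: the sum of `z` over all darts
whose dual darts have head `p`. -/
def dualImbalance (z : S.D → ℝ) (p : S.F) : ℝ :=
  ∑ d ∈ univ.filter (fun d => S.right d = p), z d

/-- A drainage with sink `r`: an antisymmetric dual flow whose dual imbalance is negative
at every face other than `r`. -/
def IsDrainage (z : S.D → ℝ) (r : S.F) : Prop :=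
  (∀ d, z (S.rev d) = - z d) ∧ ∀ q, q ≠ r → S.dualImbalance z q < 0

/-- A set of darts closed under reversal (i.e. a set of edges). -/
def RevClosed (A : Finset S.D) : Prop := ∀ d ∈ A, S.rev d ∈ A

/-- The edge set `A` connects all vertices of the primal graph. -/
def PrimalConnected (A : Finset S.D) : Prop :=
  ∀ v w : S.V, Relation.ReflTransGen (fun a b => ∃ d ∈ A, S.tail d = a ∧ S.head d = b) v w

/-- The edge set `A` connects all vertices of the dual graph (i.e. the faces). -/
def DualConnected (A : Finset S.D) : Prop :=
  ∀ p q : S.F, Relation.ReflTransGen (fun a b => ∃ d ∈ A, S.left d = a ∧ S.right d = b) p q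

/-- A spanning tree of `G`: a connected spanning set of edges with `|V| - 1` edges. -/
def IsSpanningTree (A : Finset S.D) : Prop :=
  S.RevClosed A ∧ S.PrimalConnected A ∧ A.card = 2 * (Fintype.card S.V - 1)

/-- A spanning cotree of `G`: a set of edges forming a spanning tree of the dual graph. -/
def IsSpanningCotree (A : Finset S.D) : Prop :=
  S.RevClosed A ∧ S.DualConnected A ∧ A.card = 2 * (Fintype.card S.F - 1)

/-- The clockwise neighborhood `∂⁻(F')` of a set of faces: all darts whose dual darts
have tail outside `F'` and head inside `F'`. -/
def cwBoundary (F' : Finset S.F) : Finset S.D :=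
  univ.filter fun d => S.left d ∉ F' ∧ S.right d ∈ F'

end CombSurface

/-- A tree–cotree decomposition of `G`: a partition of the edges into a spanning tree `T`,
a spanning cotree `C`, and a set `L` of leftover edges. -/
structure TreeCotree (S : CombSurface) where
  T : Finset S.D
  L : Finset S.D
  C : Finset S.D
  tree : S.IsSpanningTree T
  cotree : S.IsSpanningCotree C
  revL : S.RevClosed L
  disjTL : Disjoint T L
  disjTC : Disjoint T C
  disjLC : Disjoint L C
  cover : T ∪ L ∪ C = Finset.univ

/-- Homology signature data: a tree–cotree decomposition `(T, L, C)` together with an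
ordering `ell 1, …, ell 2g` of (oriented) leftover edges of `L` and, for each `i`, the
oriented dual fundamental cycle `cyc i` of the edge of `ell i` with the cotree `C`,
represented as the `{-1,0,1}`-valued dual circulation supported on `C + ell i` that
traverses the dart `ell i` (positively).  The homology signature of a dart `d` is the
integer vector `[d] = fun i => cyc i d`. -/
structure HomologyBasis (S : CombSurface) extends TreeCotree S where
  /-- the `i`-th leftover edge, oriented -/
  ell : Fin (2 * S.g) → S.D
  ell_mem : ∀ i, ell i ∈ L
  ell_inj : ∀ i j, (ell i = ell j ∨ ell i = S.rev (ell j)) → i = j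
  ell_cover : ∀ d ∈ L, ∃ i, d = ell i ∨ d = S.rev (ell i)
  /-- the oriented dual fundamental cycle of `ell i` with the cotree `C`,
  as a dual circulation -/
  cyc : Fin (2 * S.g) → S.D → ℤ
  cyc_antisym : ∀ i d, cyc i (S.rev d) = - cyc i d
  cyc_le_one : ∀ i d, |cyc i d| ≤ 1
  cyc_circ : ∀ i p, (∑ d ∈ univ.filter (fun d => S.right d = p), cyc i d) = 0
  cyc_supp : ∀ i d, cyc i d ≠ 0 → d ∈ C ∨ d = ell i ∨ d = S.rev (ell i)
  cyc_ell : ∀ i, cyc i (ell i) = 1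

/-- The homology signature `[f]` of a flow `f`: `[f] = ∑ d, f d • [d]`. -/
def flowSig (S : CombSurface) (H : HomologyBasis S) (f : S.D → ℝ) : Fin (2 * S.g) → ℝ :=
  fun i => ∑ d, f d * (H.cyc i d : ℝ)

/-- Strict lexicographic comparison of cost vectors. -/
def lexLt {n : ℕ} (a b : Fin n → ℝ) : Prop :=
  ∃ i, (∀ j, j < i → a j = b j) ∧ a i < b i

/-- Lexicographic comparison of cost vectors. -/
def lexLe {n : ℕ} (a b : Fin n → ℝ) : Prop := lexLt a b ∨ a = b

/-- The perturbed cost of a dart under the full lexicographic perturbation scheme: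
`c'(d) = (c(d), 1) ++ [d] ++ (z(d))`. -/
def dartCostFull (S : CombSurface) (H : HomologyBasis S) (z : S.D → ℝ) (c : S.D → ℝ)
    (d : S.D) : Fin (2 * S.g + 3) → ℝ :=
  Fin.cons (c d) (Fin.cons 1 (Fin.snoc (fun i => (H.cyc i d : ℝ)) (z d)))

/-- The perturbed cost of a dart under the modified lexicographic perturbation scheme
(no `+1` component): `c'(d) = (c(d)) ++ [d] ++ (z(d))`. -/
def dartCostMod (S : CombSurface) (H : HomologyBasis S) (z : S.D → ℝ) (c : S.D → ℝ)
    (d : S.D) : Fin (2 * S.g + 2) → ℝ :=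
  Fin.cons (c d) (Fin.snoc (fun i => (H.cyc i d : ℝ)) (z d))

/-- The perturbed cost of a flow: `c'(f) = ∑ d, f d • c'(d)`. -/
def flowCostFull (S : CombSurface) (H : HomologyBasis S) (z : S.D → ℝ) (c : S.D → ℝ)
    (f : S.D → ℝ) : Fin (2 * S.g + 3) → ℝ :=
  ∑ d, f d • dartCostFull S H z c d

/-- The unperturbed part of a cost vector from the modified scheme (first component). -/
def basePart {g : ℕ} (w : Fin (2 * g + 2) → ℝ) : ℝ := w ⟨0, by omega⟩

/-- The homology part of a cost vector from the modified scheme (middle `2g` components). -/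
def homPart {g : ℕ} (w : Fin (2 * g + 2) → ℝ) : Fin (2 * g) → ℝ :=
  fun i => w ⟨(i : ℕ) + 1, by have := i.isLt; omega⟩

/-- The face part of a cost vector from the modified scheme (last component). -/
def facePart {g : ℕ} (w : Fin (2 * g + 2) → ℝ) : ℝ := w ⟨2 * g + 1, by omega⟩

/-- Feasibility of a flow with respect to dart capacities `μ` and vertex demands `b`. -/
def Feasible (S : CombSurface) (μ : S.D → ENNReal) (b : S.V → ℝ) (f : S.D → ℝ) : Prop :=
  (∀ d, 0 ≤ f d ∧ ENNReal.ofReal (f d) ≤ μ d) ∧ ∀ v, S.imbalance f v = b v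

/-- A minimum-cost feasible flow with respect to the perturbed costs `c'`, capacities `μ`,
and demands `b`, where costs are compared lexicographically. -/
def IsMinCostFlow (S : CombSurface) (H : HomologyBasis S) (z : S.D → ℝ) (c : S.D → ℝ)
    (μ : S.D → ENNReal) (b : S.V → ℝ) (f : S.D → ℝ) : Prop :=
  Feasible S μ b f ∧ ∀ f', Feasible S μ b f' →
    lexLe (flowCostFull S H z c f) (flowCostFull S H z c f')

/-- `IsWalk S s t P`: the list of darts `P` is a directed walk from `s` to `t`. -/
def IsWalk (S : CombSurface) : S.V → S.V → List S.D → Prop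
  | s, t, [] => s = t
  | s, t, d :: P => S.tail d = s ∧ IsWalk S (S.head d) t P

/-- `IsDualWalk S p q P`: the list of darts `P` is a directed walk from face `p` to face
`q` in the dual graph. -/
def IsDualWalk (S : CombSurface) : S.F → S.F → List S.D → Prop
  | p, q, [] => p = q
  | p, q, d :: P => S.left d = p ∧ IsDualWalk S (S.right d) q P

/-- The cost vector of a walk: the sum of the cost vectors of its darts. -/
def pathCost {n : ℕ} (S : CombSurface) (cp : S.D → Fin n → ℝ) (P : List S.D) :
    Fin n → ℝ :=
  (P.map cp).sum

/-- `P` is a lexicographically shortest directed walk from `s` to `t` with respect to the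
vector-valued dart costs `cp`. -/
def IsShortestWalk {n : ℕ} (S : CombSurface) (cp : S.D → Fin n → ℝ) (s t : S.V)
    (P : List S.D) : Prop :=
  IsWalk S s t P ∧ ∀ Q, IsWalk S s t Q → lexLe (pathCost S cp P) (pathCost S cp Q)

/-- A list of darts viewed as a flow: each dart receives the number of times it occurs. -/
def listFlow (S : CombSurface) (P : List S.D) : S.D → ℝ := fun d => (P.count d : ℝ)

/-- The parent map of a spanning cotree rooted at `r`, given the successor darts. -/
def parentOfSucc (S : CombSurface) (r : S.F) (succ : S.F → S.D) (p : S.F) : S.F :=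
  if p = r then r else S.right (succ p)

/-- The descendants of a face `p` in the cotree rooted at `r` (including `p` itself). -/
def descendants (S : CombSurface) (r : S.F) (succ : S.F → S.D) (p : S.F) :
    Finset S.F :=
  univ.filter fun o => ∃ m : ℕ, (parentOfSucc S r succ)^[m] o = p

/-- The dual flow sending one unit of flow from every face to `r` along the cotree:
on a successor dart `succ p` its value is the number of descendants of `p`, on the
reversal of a successor dart it is the negation of that number, and on darts whose edges
are not in the cotree it is `0`. -/
def treeDrainage (S : CombSurface) (r : S.F) (succ : S.F → S.D) (d : S.D) : ℝ :=
  if ∃ p, p ≠ r ∧ succ p = d then ((descendants S r succ (S.left d)).card : ℝ)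
  else if ∃ p, p ≠ r ∧ succ p = S.rev d then
    -((descendants S r succ (S.left (S.rev d))).card : ℝ)
  else 0

/-- `RedOf S pred v u x`: in the tree rooted at `v` with predecessor darts `pred`, the
tree path from `v` to `x` passes through `u` (when `pred u` is the dart `v→u`, this says
exactly that the tree path from `v` to `x` uses the dart `v→u`, i.e. `x` is red). -/
def RedOf (S : CombSurface) (pred : S.V → S.D) (v u x : S.V) : Prop :=
  ∃ m : ℕ, (fun y => if y = v then v else S.tail (pred y))^[m] x = u

/-- The darts of the tree determined by the predecessor darts `pred` (both orientations
of each tree edge). -/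
def predDarts (S : CombSurface) (pred : S.V → S.D) (v : S.V) : Set S.D :=
  {d | ∃ x, x ≠ v ∧ (pred x = d ∨ pred x = S.rev d)}

/-- A shortest path tree rooted at `v` with respect to vector-valued dart costs `cost`,
together with the (lexicographic) shortest path distances: every non-root vertex has a
tense predecessor dart, all darts have non-negative slack, and the predecessor darts form
a tree reaching back to the root. -/
structure SPTree (S : CombSurface) {n : ℕ} (cost : S.D → Fin n → ℝ) (v : S.V) where
  pred : S.V → S.D
  dist : S.V → Fin n → ℝ
  dist_root : dist v = 0
  pred_head : ∀ x, x ≠ v → S.head (pred x) = x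
  pred_tense : ∀ x, x ≠ v → dist x = dist (S.tail (pred x)) + cost (pred x)
  slack_nonneg : ∀ d, lexLe (dist (S.head d)) (dist (S.tail d) + cost d)
  reach : ∀ x, ∃ m : ℕ, (fun y => if y = v then v else S.tail (pred y))^[m] x = v

namespace SPTree

variable {S : CombSurface} {n : ℕ} {cost : S.D → Fin n → ℝ} {v : S.V}

/-- The slack of a dart: `slack(x→y) = dist(x) + cost(x→y) − dist(y)`. -/
def slack (T : SPTree S cost v) (d : S.D) : Fin n → ℝ :=
  T.dist (S.tail d) + cost d - T.dist (S.head d)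

/-- A vertex `x` is red if the tree path from the root `v` to `x` uses the dart `v→u`;
here `u` is the head of that dart. -/
def Red (T : SPTree S cost v) (u x : S.V) : Prop := RedOf S T.pred v u x

/-- A dart is active if its tail is blue and its head is red. -/
def Active (T : SPTree S cost v) (u : S.V) (d : S.D) : Prop :=
  ¬ T.Red u (S.tail d) ∧ T.Red u (S.head d)

/-- The darts of the shortest path tree (both orientations of each tree edge). -/
def treeDarts (T : SPTree S cost v) : Set S.D := predDarts S T.pred v

end SPTree

/-- `K` realizes the fundamental cycle of the dart `d` with the tree whose darts are
`TD`: the concatenation `d :: K` is a simple closed walk whose non-`d` darts all lie in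
the tree. -/
def IsFundCycleWalk (S : CombSurface) (TD : Set S.D) (d : S.D) (K : List S.D) : Prop :=
  IsWalk S (S.head d) (S.tail d) K ∧ (∀ e ∈ K, e ∈ TD) ∧ ((d :: K).map S.head).Nodup

/-- The homology signature of the fundamental cycle `d :: K`. -/
def cycleSig (S : CombSurface) (H : HomologyBasis S) (d : S.D) (K : List S.D) :
    Fin (2 * S.g) → ℝ :=
  fun i => (H.cyc i d : ℝ) + (K.map fun e => (H.cyc i e : ℝ)).sum

/-- `Y` is a subgraph of the cut graph `X` in which every incident dual vertex other than
`q` and `r` has degree at least 2. -/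
def IsCore (S : CombSurface) (X : Set S.D) (q r : S.F) (Y : Set S.D) : Prop :=
  Y ⊆ X ∧ (∀ d ∈ Y, S.rev d ∈ Y) ∧
    ∀ d ∈ Y, S.left d ≠ q → S.left d ≠ r → ∃ d' ∈ Y, d' ≠ d ∧ S.left d' = S.left d

/-- The 2-core of the cut graph `X` (keeping `q` and `r`): the largest subgraph in which
every dual vertex other than `q` and `r` has degree at least 2; equivalently, the result
of repeatedly deleting degree-1 dual vertices other than `q` and `r`. -/
def twoCore (S : CombSurface) (X : Set S.D) (q r : S.F) : Set S.D :=
  ⋃₀ {Y | IsCore S X q r Y}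

/-- An oriented cut path of the 2-core `X2`: a directed dual path whose darts lie in `X2`
and whose internal dual vertices are not `q` or `r` and have degree exactly 2 in `X2`. -/
def IsCutPath (S : CombSurface) (X2 : Set S.D) (q r : S.F) (P : List S.D) : Prop :=
  (∀ d ∈ P, d ∈ X2) ∧
    P.Chain' fun d₁ d₂ => S.right d₁ = S.left d₂ ∧ S.right d₁ ≠ q ∧ S.right d₁ ≠ r ∧
      ∀ e ∈ X2, S.left e = S.right d₁ → e = S.rev d₁ ∨ e = d₂

/-- `L` is the clockwise facial walk around the face `p` (cyclically closed). -/
def IsFacialCycle (S : CombSurface) (p : S.F) (L : List S.D) : Prop :=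
  L ≠ [] ∧ (∀ d ∈ L, S.left d = p) ∧
    List.Chain' (fun d₁ d₂ => d₂ = S.rev (S.next d₁)) (L ++ L.take 1)

/-- Elementary combinatorial homotopy moves in the surface punctured at the faces `o` and
`r`, where the first endpoint of a walk may additionally slide forward or backward along
the fixed walk `R` (the walk `u₁→u₂→⋯→u_{k-1}`): removal/insertion of a spur, exchanging
two arcs that together bound a face other than `o` and `r`, and sliding the initial
endpoint along `R`. -/
inductive RHStep (S : CombSurface) (o r : S.F) (R : List S.D) :
    List S.D → List S.D → Prop where
  | spur (P Q : List S.D) (d : S.D) :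
      RHStep S o r R (P ++ d :: S.rev d :: Q) (P ++ Q)
  | face (P Q A B : List S.D) (p : S.F) (hpo : p ≠ o) (hpr : p ≠ r)
      (hface : IsFacialCycle S p (A ++ (B.reverse.map S.rev))) :
      RHStep S o r R (P ++ A ++ Q) (P ++ B ++ Q)
  | slide (P : List S.D) (d : S.D) (hd : d ∈ R) :
      RHStep S o r R (d :: P) P

/-- Restricted homotopy of walks with respect to a dart whose left face is `o`: homotopy
in the surface punctured at `o` and `r`, where the first endpoint may move forward or
backward along the walk `R`. -/
def RHomotopic (S : CombSurface) (o r : S.F) (R : List S.D) (P₁ P₂ : List S.D) : Prop :=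
  Relation.EqvGen (RHStep S o r R) P₁ P₂

/-- Let `C` be a spanning cotree of `G` rooted at a face `r`, with
successor darts `succ` (so `succ p` is the dart of `C` leaving `p` on the dual path from
`p` to `r`), and let `z` be the dual flow defined by: `z(d) = 0` if the edge of `d` is
not in `C`; if `p↑q` is the successor dart of the dual vertex `p`, then `z(p↑q)` equals
the number of descendants of `p` in `C` (including `p` itself), and `z` of its reversal
is the negation of that number.  Then `∂*z(q) = −1` for every face `q ≠ r` and
`∂*z(r) = |F| − 1`; in particular, `z` is a drainage with sink `r`. -/
theorem holiest_treeDrainage (S : CombSurface) (C : Finset S.D) (r : S.F)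
    (succ : S.F → S.D)
    (hC : S.IsSpanningCotree C)
    (hmem : ∀ p, p ≠ r → succ p ∈ C ∧ S.left (succ p) = p)
    (hreach : ∀ p, ∃ m : ℕ, (parentOfSucc S r succ)^[m] p = r)
    (hedges : ∀ d ∈ C, ∃ p, p ≠ r ∧ (succ p = d ∨ succ p = S.rev d)) :
    (∀ q, q ≠ r → S.dualImbalance (treeDrainage S r succ) q = -1) ∧
    S.dualImbalance (treeDrainage S r succ) r = (Fintype.card S.F : ℝ) - 1 ∧
    S.IsDrainage (treeDrainage S r succ) r := by
  classical
  set par : S.F → S.F := parentOfSucc S r succ with hpar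
  have hparr : par r = r := by simp [hpar, parentOfSucc]
  have hparne : ∀ p, p ≠ r → par p = S.right (succ p) := by
    intro p hp; simp [hpar, parentOfSucc, hp]
  have hiterr : ∀ n, par^[n] r = r := fun n => Function.iterate_fixed hparr n
  obtain ⟨depth, hdspec, hdmin⟩ : ∃ f : S.F → ℕ,
      (∀ p, par^[f p] p = r) ∧ (∀ p m, par^[m] p = r → f p ≤ m) :=
    ⟨fun p => Nat.find (hreach p), fun p => Nat.find_spec (hreach p),
      fun p m h => Nat.find_min' (hreach p) h⟩
  have hdstep : ∀ p, p ≠ r → depth p = depth (par p) + 1 := by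
    intro p hp
    have h1 : depth p ≤ depth (par p) + 1 :=
      hdmin p _ (by rw [Function.iterate_succ_apply]; exact hdspec (par p))
    have h0 : depth p ≠ 0 := by
      intro h0
      have := hdspec p
      rw [h0, Function.iterate_zero_apply] at this
      exact hp this
    have h2 : par^[depth p - 1] (par p) = r := by
      have e : depth p = (depth p - 1) + 1 := by omega
      have hh := hdspec p
      rw [e, Function.iterate_succ_apply] at hh
      exact hh
    have h3 := hdmin (par p) _ h2
    omega
  have hiterdepth : ∀ m o p, p ≠ r → par^[m] o = p → depth o = m + depth p := by
    intro m
    induction m with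
    | zero =>
      intro o p _ h
      rw [Function.iterate_zero_apply] at h
      rw [h]; omega
    | succ k ih =>
      intro o p hp h
      have ho : o ≠ r := by
        rintro rfl; rw [hiterr] at h; exact hp h.symm
      rw [Function.iterate_succ_apply] at h
      have := ih (par o) p hp h
      rw [hdstep o ho]; omega
  have hdescmem : ∀ o p, o ∈ descendants S r succ p ↔ ∃ m, par^[m] o = p := by
    intro o p
    simp only [descendants, Finset.mem_filter, Finset.mem_univ, true_and, ← hpar]
  -- the counting lemma for descendants
  have haux : ∀ m o q, par^[m] o = q →
      o = q ∨ ∃ p, (p ≠ r ∧ par p = q) ∧ ∃ k, par^[k] o = p := by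
    intro m
    induction m with
    | zero => intro o q h; exact Or.inl h
    | succ k ih =>
      intro o q h
      rw [Function.iterate_succ_apply'] at h
      by_cases hc : par^[k] o = r
      · have hq : q = r := by rw [hc, hparr] at h; exact h.symm
        exact ih o q (by rw [hc, hq])
      · exact Or.inr ⟨par^[k] o, ⟨hc, h⟩, k, rfl⟩
  have hcard : ∀ q, (descendants S r succ q).card
      = 1 + ∑ p ∈ Finset.univ.filter (fun p => p ≠ r ∧ par p = q),
          (descendants S r succ p).card := by
    intro q
    have hsplit : descendants S r succ q
        = insert q ((Finset.univ.filter (fun p => p ≠ r ∧ par p = q)).biUnion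
            (fun p => descendants S r succ p)) := by
      ext o
      simp only [Finset.mem_insert, Finset.mem_biUnion, Finset.mem_filter, Finset.mem_univ,
        true_and, hdescmem]
      constructor
      · rintro ⟨m, hm⟩
        rcases haux m o q hm with h | ⟨p, hp, k, hk⟩
        · exact Or.inl h
        · exact Or.inr ⟨p, hp, k, hk⟩
      · rintro (rfl | ⟨p, ⟨hpr, hpq⟩, m, hm⟩)
        · exact ⟨0, rfl⟩
        · exact ⟨m + 1, by rw [Function.iterate_succ_apply', hm, hpq]⟩
    have hqnot : q ∉ (Finset.univ.filter (fun p => p ≠ r ∧ par p = q)).biUnion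
        (fun p => descendants S r succ p) := by
      intro hq
      simp only [Finset.mem_biUnion, Finset.mem_filter, Finset.mem_univ, true_and,
        hdescmem] at hq
      obtain ⟨p, ⟨hpr, hpq⟩, m, hm⟩ := hq
      have h1 := hiterdepth m q p hpr hm
      have h2 := hdstep p hpr
      rw [hpq] at h2
      omega
    have hdisj : ∀ p₁ ∈ Finset.univ.filter (fun p => p ≠ r ∧ par p = q),
        ∀ p₂ ∈ Finset.univ.filter (fun p => p ≠ r ∧ par p = q), p₁ ≠ p₂ →
        Disjoint (descendants S r succ p₁) (descendants S r succ p₂) := by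
      intro p₁ h₁ p₂ h₂ hne
      simp only [Finset.mem_filter, Finset.mem_univ, true_and] at h₁ h₂
      rw [Finset.disjoint_left]
      intro o ho₁ ho₂
      rw [hdescmem] at ho₁ ho₂
      obtain ⟨m₁, hm₁⟩ := ho₁
      obtain ⟨m₂, hm₂⟩ := ho₂
      have e₁ := hiterdepth m₁ o p₁ h₁.1 hm₁
      have e₂ := hiterdepth m₂ o p₂ h₂.1 hm₂
      have d₁ := hdstep p₁ h₁.1
      have d₂ := hdstep p₂ h₂.1
      rw [h₁.2] at d₁
      rw [h₂.2] at d₂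
      have hme : m₁ = m₂ := by omega
      exact hne (by rw [← hm₁, hme, hm₂])
    rw [hsplit, Finset.card_insert_of_notMem hqnot, Finset.card_biUnion hdisj]
    omega
  have hdescr : descendants S r succ r = Finset.univ := by
    ext o
    simp only [Finset.mem_univ, iff_true, hdescmem]
    exact hreach o
  have hcardF : Fintype.card S.F
      = 1 + ∑ p ∈ Finset.univ.filter (fun p => p ≠ r ∧ par p = r),
          (descendants S r succ p).card := by
    have h := hcard r
    rw [hdescr, Finset.card_univ] at h
    exact h
  -- basic facts about succ
  have hsuccinj : ∀ p p', p ≠ r → p' ≠ r → succ p = succ p' → p = p' := by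
    intro p p' hp hp' h
    rw [← (hmem p hp).2, h, (hmem p' hp').2]
  have hnorev : ∀ p p', p ≠ r → p' ≠ r → succ p ≠ S.rev (succ p') := by
    intro p p' hp hp' h
    have h1 : par p = p' := by
      rw [hparne p hp, CombSurface.right, h, S.rev_invol, (hmem p' hp').2]
    have h2 : par p' = p := by
      rw [hparne p' hp', CombSurface.right, ← h, (hmem p hp).2]
    have d1 := hdstep p hp
    have d2 := hdstep p' hp'
    rw [h1] at d1
    rw [h2] at d2
    omega
  -- the flow formula
  have hz : ∀ d, treeDrainage S r succ d
      = ∑ p ∈ Finset.univ.filter (fun p => p ≠ r),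
          ((descendants S r succ p).card : ℝ) *
            ((if succ p = d then 1 else 0) - (if S.rev (succ p) = d then 1 else 0)) := by
    intro d
    by_cases hA : ∃ p, p ≠ r ∧ succ p = d
    · obtain ⟨p₀, hp₀, hd₀⟩ := hA
      rw [treeDrainage, if_pos ⟨p₀, hp₀, hd₀⟩]
      rw [Finset.sum_eq_single p₀]
      · rw [if_pos hd₀, if_neg (by rw [← hd₀]; exact S.rev_ne _), ← hd₀, (hmem p₀ hp₀).2]
        ring
      · intro p hp hne
        simp only [Finset.mem_filter, Finset.mem_univ, true_and] at hp
        rw [if_neg (fun h => hne (hsuccinj p p₀ hp hp₀ (h.trans hd₀.symm))),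
          if_neg (fun h => hnorev p₀ p hp₀ hp (by rw [← hd₀] at h; exact h.symm))]
        ring
      · intro h
        exact absurd (Finset.mem_filter.mpr ⟨Finset.mem_univ p₀, hp₀⟩) h
    · by_cases hB : ∃ p, p ≠ r ∧ succ p = S.rev d
      · obtain ⟨p₀, hp₀, hd₀⟩ := hB
        have hrd : S.rev (succ p₀) = d := by rw [hd₀, S.rev_invol]
        rw [treeDrainage, if_neg hA, if_pos ⟨p₀, hp₀, hd₀⟩]
        rw [Finset.sum_eq_single p₀]
        · rw [if_neg (fun h => S.rev_ne (succ p₀) (hrd.trans h.symm)), if_pos hrd,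
            ← hd₀, (hmem p₀ hp₀).2]
          ring
        · intro p hp hne
          simp only [Finset.mem_filter, Finset.mem_univ, true_and] at hp
          rw [if_neg (fun h => hA ⟨p, hp, h⟩),
            if_neg (fun h => hne (hsuccinj p p₀ hp hp₀
              (by rw [← S.rev_invol (succ p), h, ← hrd, S.rev_invol])))]
          ring
        · intro h
          exact absurd (Finset.mem_filter.mpr ⟨Finset.mem_univ p₀, hp₀⟩) h
      · rw [treeDrainage, if_neg hA, if_neg hB]
        symm
        apply Finset.sum_eq_zero
        intro p hp
        simp only [Finset.mem_filter, Finset.mem_univ, true_and] at hp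
        rw [if_neg (fun h => hA ⟨p, hp, h⟩),
          if_neg (fun h => hB ⟨p, hp, by rw [← h, S.rev_invol]⟩)]
        ring
  -- computing the dual imbalance
  have himb : ∀ q, S.dualImbalance (treeDrainage S r succ) q
      = (∑ p ∈ Finset.univ.filter (fun p => p ≠ r ∧ par p = q),
          ((descendants S r succ p).card : ℝ))
        - (if q = r then 0 else ((descendants S r succ q).card : ℝ)) := by
    intro q
    rw [CombSurface.dualImbalance]
    rw [Finset.sum_congr rfl (fun d _ => hz d), Finset.sum_comm]
    have step1 : ∀ p ∈ Finset.univ.filter (fun p => p ≠ r),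
        (∑ d ∈ Finset.univ.filter (fun d => S.right d = q),
          ((descendants S r succ p).card : ℝ) *
            ((if succ p = d then 1 else 0) - (if S.rev (succ p) = d then 1 else 0)))
        = (if par p = q then ((descendants S r succ p).card : ℝ) else 0)
          - (if p = q then ((descendants S r succ p).card : ℝ) else 0) := by
      intro p hp
      simp only [Finset.mem_filter, Finset.mem_univ, true_and] at hp
      have hrr : S.right (S.rev (succ p)) = p := by
        rw [CombSurface.right, S.rev_invol, (hmem p hp).2]
      rw [← Finset.mul_sum, Finset.sum_sub_distrib, Finset.sum_ite_eq, Finset.sum_ite_eq]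
      simp only [Finset.mem_filter, Finset.mem_univ, true_and, hrr, ← hparne p hp]
      split_ifs <;> ring
    rw [Finset.sum_congr rfl step1, Finset.sum_sub_distrib]
    congr 1
    · rw [← Finset.sum_filter, Finset.filter_filter]
    · rw [Finset.sum_ite_eq']
      by_cases hq : q = r
      · simp [hq]
      · simp [hq]
  have hq1 : ∀ q, q ≠ r → S.dualImbalance (treeDrainage S r succ) q = -1 := by
    intro q hq
    rw [himb q, if_neg hq]
    have h := congrArg (Nat.cast : ℕ → ℝ) (hcard q)
    push_cast at h
    linarith
  have hq2 : S.dualImbalance (treeDrainage S r succ) r = (Fintype.card S.F : ℝ) - 1 := by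
    rw [himb r, if_pos rfl]
    have h := congrArg (Nat.cast : ℕ → ℝ) hcardF
    push_cast at h
    linarith
  have hanti : ∀ d, treeDrainage S r succ (S.rev d) = - treeDrainage S r succ d := by
    intro d
    rw [hz d, hz (S.rev d), ← Finset.sum_neg_distrib]
    refine Finset.sum_congr rfl fun p hp => ?_
    have h1 : (succ p = S.rev d) ↔ (S.rev (succ p) = d) := by
      constructor
      · intro h; rw [h, S.rev_invol]
      · intro h; rw [← h, S.rev_invol]
    have h2 : (S.rev (succ p) = S.rev d) ↔ (succ p = d) := by
      constructor
      · intro h; rw [← S.rev_invol (succ p), h, S.rev_invol]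
      · intro h; rw [h]
    rw [if_congr h1 rfl rfl, if_congr h2 rfl rfl]
    ring
  exact ⟨hq1, hq2, hanti, fun q hq => by rw [hq1 q hq]; norm_num⟩
end
end

section
/- Let f₁ and f₂ be distinct feasible flows with respect to capacities μ and demands b. Then there exists a feasible flow f such that at least one of c'(f) < c'(f₁) or c'(f) < c'(f₂) holds, where cost vectors are compared lexicographically. -/
/-!
Common combinatorial framework for graphs cellularly embedded on orientable surfaces,
following Erickson, Fox, and Lkhamsuren, "Holiest Minimum-Cost Paths and Flows in
Surface Graphs".

A graph `G = (V, E, F)` embedded on an orientable surface is given combinatorially by a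
finite set of darts together with a fixed-point-free involution `rev` (whose orbits are
the edges) and a permutation `next` (= π, whose orbits are the vertices); the faces are
the orbits of `rev ∘ next`, and the genus `g` is determined by Euler's formula
`|V| - |E| + |F| = 2 - 2g`.
-/

noncomputable section

open Finset

open scoped Classical

set_option maxHeartbeats 1000000

/-! ### Auxiliary lemmas for the proof of `holiest_something_cheaper` -/

section EFLtree
set_option linter.unusedVariables false
set_option linter.unusedSectionVars false



variable {D V : Type*} [DecidableEq D] [DecidableEq V]

/-- ancillary: walks avoiding a removed leaf. -/
lemma EFL_avoid_leaf (rev : D → D) (hrev : ∀ e, rev (rev e) = e)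
    (hrevne : ∀ e, rev e ≠ e)
    (hd tl : D → V) (hcompat : ∀ e, tl e = hd (rev e)) (A : Finset D)
    (hArev : ∀ e ∈ A, rev e ∈ A)
    (u : V) (d₀ : D) (hd₀A : d₀ ∈ A)
    (huniq : ∀ e ∈ A, hd e = u → e = d₀)
    (hd₀u : hd d₀ = u) :
    ∀ p q : V, Relation.ReflTransGen (fun x y => ∃ d ∈ A, tl d = x ∧ hd d = y) p q →
      q ≠ u →
      ((p ≠ u → Relation.ReflTransGen
          (fun x y => ∃ d ∈ (A.erase d₀).erase (rev d₀), tl d = x ∧ hd d = y) p q) ∧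
        (p = u → Relation.ReflTransGen
          (fun x y => ∃ d ∈ (A.erase d₀).erase (rev d₀), tl d = x ∧ hd d = y) (tl d₀) q)) := by
  intro p q hpq hqu
  have huniq' : ∀ e ∈ A, tl e = u → e = rev d₀ := by
    intro e heA heu
    have h1 : hd (rev e) = u := by rw [← hcompat e]; exact heu
    have := huniq (rev e) (hArev e heA) h1
    rw [← hrev e, this]
  have htlrev : tl (rev d₀) = u := by rw [hcompat, hrev, hd₀u]
  have htne : tl d₀ ≠ u := by
    intro h
    exact hrevne d₀ (huniq' d₀ hd₀A h).symm
  induction hpq using Relation.ReflTransGen.head_induction_on with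
  | refl => exact ⟨fun _ => .refl, fun hp => absurd hp hqu⟩
  | head hstep htail ih =>
    rename_i x m
    obtain ⟨d, hdA, hdt, hdh⟩ := hstep
    constructor
    · intro hxu
      by_cases hmu : m = u
      · have hdd : d = d₀ := huniq d hdA (hdh.trans hmu)
        have hx : tl d₀ = x := by rw [← hdd, hdt]
        exact hx ▸ ih.2 hmu
      · have hd1 : d ≠ d₀ := fun h => hmu (by rw [← hdh, h, hd₀u])
        have hd2 : d ≠ rev d₀ := fun h => hxu (by rw [← hdt, h, htlrev])
        exact Relation.ReflTransGen.head
          ⟨d, by simp [Finset.mem_erase, hd1, hd2, hdA], hdt, hdh⟩ (ih.1 hmu)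
    · intro hxu
      have hdd : d = rev d₀ := huniq' d hdA (hdt.trans hxu)
      have hm : tl d₀ = m := by rw [hcompat d₀, ← hdd]; exact hdh
      have hmne : m ≠ u := by rw [← hm]; exact htne
      exact hm ▸ ih.1 hmne



lemma EFL_leaf (rev : D → D) (hrev : ∀ e, rev (rev e) = e) (hrevne : ∀ e, rev e ≠ e)
    (hd tl : D → V) (hcompat : ∀ e, tl e = hd (rev e))
    (U : Finset V) (A : Finset D)
    (hArev : ∀ e ∈ A, rev e ∈ A) (hend : ∀ e ∈ A, hd e ∈ U)
    (hconn : ∀ p ∈ U, ∀ q ∈ U,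
      Relation.ReflTransGen (fun x y => ∃ d ∈ A, tl d = x ∧ hd d = y) p q)
    (hcard : A.card = 2 * (U.card - 1)) (hU2 : 2 ≤ U.card) :
    ∃ u ∈ U, ∃ d₀ ∈ A, hd d₀ = u ∧ (∀ e ∈ A, hd e = u → e = d₀) := by
  have hfib : A.card = ∑ v ∈ U, (A.filter fun d => hd d = v).card :=
    Finset.card_eq_sum_card_fiberwise hend
  -- find a vertex of degree ≤ 1
  have hex : ∃ u ∈ U, (A.filter fun d => hd d = u).card ≤ 1 := by
    by_contra hno
    push_neg at hno
    have : ∑ v ∈ U, 2 ≤ ∑ v ∈ U, (A.filter fun d => hd d = v).card :=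
      Finset.sum_le_sum fun v hv => hno v hv
    rw [Finset.sum_const, smul_eq_mul] at this
    omega
  obtain ⟨u, huU, hdeg⟩ := hex
  -- degree is at least 1
  obtain ⟨w, hwU, hwu⟩ := Finset.exists_mem_ne (by omega : 1 < U.card) u
  have hdeg1 : 1 ≤ (A.filter fun d => hd d = u).card := by
    have h1 := hconn u huU w hwU
    rcases Relation.ReflTransGen.cases_head h1 with heq | ⟨m, ⟨d, hdA, hdt, hdh⟩, _⟩
    · exact absurd heq.symm hwu
    · have : rev d ∈ A.filter fun e => hd e = u := by
        refine Finset.mem_filter.2 ⟨hArev d hdA, ?_⟩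
        rw [← hcompat d, hdt]
      exact Finset.card_pos.2 ⟨rev d, this⟩
  have : (A.filter fun d => hd d = u).card = 1 := le_antisymm hdeg hdeg1
  obtain ⟨d₀, hd₀⟩ := Finset.card_eq_one.1 this
  have hd₀mem : d₀ ∈ A.filter fun d => hd d = u := hd₀ ▸ Finset.mem_singleton_self d₀
  refine ⟨u, huU, d₀, (Finset.mem_filter.1 hd₀mem).1, (Finset.mem_filter.1 hd₀mem).2, ?_⟩
  intro e heA heu
  have : e ∈ A.filter fun d => hd d = u := Finset.mem_filter.2 ⟨heA, heu⟩
  rw [hd₀] at this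
  exact Finset.mem_singleton.1 this

lemma EFL_tree_potential_aux (rev : D → D) (hrev : ∀ e, rev (rev e) = e)
    (hrevne : ∀ e, rev e ≠ e)
    (hd tl : D → V) (hcompat : ∀ e, tl e = hd (rev e)) :
    ∀ (n : ℕ) (U : Finset V) (A : Finset D) (a : D → ℝ),
      U.card ≤ n → U.Nonempty →
      (∀ e ∈ A, rev e ∈ A) → (∀ e ∈ A, hd e ∈ U) →
      (∀ p ∈ U, ∀ q ∈ U,
        Relation.ReflTransGen (fun x y => ∃ d ∈ A, tl d = x ∧ hd d = y) p q) →
      A.card = 2 * (U.card - 1) →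
      (∀ e, a (rev e) = - a e) →
      ∃ α : V → ℝ, ∀ d ∈ A, a d = α (hd d) - α (tl d) := by
  intro n
  induction n with
  | zero =>
    intro U A a hcard hne _ _ _ _ _
    exact absurd (Finset.card_pos.2 hne) (by omega)
  | succ n ih =>
    intro U A a hUlen hUne hArev hend hconn hcard hanti
    by_cases hU1 : U.card ≤ 1
    · have : A.card = 0 := by omega
      have hA : A = ∅ := Finset.card_eq_zero.1 this
      exact ⟨fun _ => 0, fun d hd => absurd hd (by simp [hA])⟩
    · have hU2 : 2 ≤ U.card := by omega
      obtain ⟨u, huU, d₀, hd₀A, hd₀u, huniq⟩ :=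
        EFL_leaf rev hrev hrevne hd tl hcompat U A hArev hend hconn hcard hU2
      have huniq' : ∀ e ∈ A, tl e = u → e = rev d₀ := by
        intro e heA heu
        have h1 : hd (rev e) = u := by rw [← hcompat e]; exact heu
        have := huniq (rev e) (hArev e heA) h1
        rw [← hrev e, this]
      set t := tl d₀ with htdef
      have htU : t ∈ U := by rw [htdef, hcompat]; exact hend _ (hArev _ hd₀A)
      have htne : t ≠ u := by
        intro h
        exact hrevne d₀ (huniq' d₀ hd₀A h).symm
      set A' := (A.erase d₀).erase (rev d₀) with hA'def
      set U' := U.erase u with hU'def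
      have hrd₀A : rev d₀ ∈ A := hArev _ hd₀A
      have hd₀ne : d₀ ≠ rev d₀ := fun h => hrevne d₀ h.symm
      have hmemA' : ∀ e, e ∈ A' ↔ e ∈ A ∧ e ≠ d₀ ∧ e ≠ rev d₀ := by
        intro e; simp [hA'def, Finset.mem_erase]; tauto
      have hcardA' : A'.card = A.card - 2 := by
        rw [hA'def, Finset.card_erase_of_mem, Finset.card_erase_of_mem hd₀A]
        · omega
        · exact Finset.mem_erase.2 ⟨fun h => hd₀ne h.symm, hrd₀A⟩
      have hcardU' : U'.card = U.card - 1 := Finset.card_erase_of_mem huU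
      have hA'rev : ∀ e ∈ A', rev e ∈ A' := by
        intro e he
        rw [hmemA'] at he ⊢
        refine ⟨hArev e he.1, ?_, ?_⟩
        · intro h; exact he.2.2 (by rw [← hrev e, h])
        · intro h; exact he.2.1 (by rw [← hrev e, h, hrev])
      have hend' : ∀ e ∈ A', hd e ∈ U' := by
        intro e he
        rw [hmemA'] at he
        refine Finset.mem_erase.2 ⟨?_, hend e he.1⟩
        intro h
        exact he.2.1 (huniq e he.1 h)
      have hconn' : ∀ p ∈ U', ∀ q ∈ U',
          Relation.ReflTransGen (fun x y => ∃ d ∈ A', tl d = x ∧ hd d = y) p q := by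
        intro p hp q hq
        have hp' := Finset.mem_erase.1 hp
        have hq' := Finset.mem_erase.1 hq
        have h := @EFL_avoid_leaf D V _ _ rev hrev hrevne hd tl hcompat A hArev u d₀ hd₀A huniq hd₀u
          p q (hconn p hp'.2 q hq'.2) hq'.1
        exact h.1 hp'.1
      obtain ⟨α', hα'⟩ := ih U' A' a (by omega) ⟨t, Finset.mem_erase.2 ⟨htne, htU⟩⟩
        hA'rev hend' hconn' (by omega) hanti
      refine ⟨Function.update α' u (α' t + a d₀), ?_⟩
      intro d hdA
      by_cases h1 : d = d₀
      · subst h1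
        rw [hd₀u, ← htdef, Function.update_self, Function.update_of_ne htne]
        ring
      · by_cases h2 : d = rev d₀
        · subst h2
          have hh : hd (rev d₀) = t := by rw [htdef, hcompat]
          have ht2 : tl (rev d₀) = u := by rw [hcompat, hrev, hd₀u]
          rw [hh, ht2, Function.update_self, Function.update_of_ne htne, hanti]
          ring
        · have hdA' : d ∈ A' := (hmemA' d).2 ⟨hdA, h1, h2⟩
          have hh : hd d ≠ u := fun h => h1 (huniq d hdA h)
          have ht2 : tl d ≠ u := fun h => h2 (huniq' d hdA h)
          rw [Function.update_of_ne hh, Function.update_of_ne ht2]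
          exact hα' d hdA'

lemma EFL_tree_support_aux (rev : D → D) (hrev : ∀ e, rev (rev e) = e)
    (hrevne : ∀ e, rev e ≠ e)
    (hd tl : D → V) (hcompat : ∀ e, tl e = hd (rev e)) :
    ∀ (n : ℕ) (U : Finset V) (A : Finset D) (β : D → ℝ),
      U.card ≤ n → U.Nonempty →
      (∀ e ∈ A, rev e ∈ A) → (∀ e ∈ A, hd e ∈ U) →
      (∀ p ∈ U, ∀ q ∈ U,
        Relation.ReflTransGen (fun x y => ∃ d ∈ A, tl d = x ∧ hd d = y) p q) →
      A.card = 2 * (U.card - 1) →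
      (∀ e, β (rev e) = - β e) →
      (∀ v, ∑ d ∈ A.filter (fun d => hd d = v), β d = 0) →
      ∀ d ∈ A, β d = 0 := by
  intro n
  induction n with
  | zero =>
    intro U A β hcard hne _ _ _ _ _ _
    exact absurd (Finset.card_pos.2 hne) (by omega)
  | succ n ih =>
    intro U A β hUlen hUne hArev hend hconn hcard hanti hsum
    by_cases hU1 : U.card ≤ 1
    · have : A.card = 0 := by omega
      have hA : A = ∅ := Finset.card_eq_zero.1 this
      intro d hd; exact absurd hd (by simp [hA])
    · have hU2 : 2 ≤ U.card := by omega
      obtain ⟨u, huU, d₀, hd₀A, hd₀u, huniq⟩ :=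
        EFL_leaf rev hrev hrevne hd tl hcompat U A hArev hend hconn hcard hU2
      have huniq' : ∀ e ∈ A, tl e = u → e = rev d₀ := by
        intro e heA heu
        have h1 : hd (rev e) = u := by rw [← hcompat e]; exact heu
        have := huniq (rev e) (hArev e heA) h1
        rw [← hrev e, this]
      set t := tl d₀ with htdef
      have htU : t ∈ U := by rw [htdef, hcompat]; exact hend _ (hArev _ hd₀A)
      have htne : t ≠ u := by
        intro h
        exact hrevne d₀ (huniq' d₀ hd₀A h).symm
      set A' := (A.erase d₀).erase (rev d₀) with hA'def
      set U' := U.erase u with hU'def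
      have hrd₀A : rev d₀ ∈ A := hArev _ hd₀A
      have hd₀ne : d₀ ≠ rev d₀ := fun h => hrevne d₀ h.symm
      have hmemA' : ∀ e, e ∈ A' ↔ e ∈ A ∧ e ≠ d₀ ∧ e ≠ rev d₀ := by
        intro e; simp [hA'def, Finset.mem_erase]; tauto
      have hcardA' : A'.card = A.card - 2 := by
        rw [hA'def, Finset.card_erase_of_mem, Finset.card_erase_of_mem hd₀A]
        · omega
        · exact Finset.mem_erase.2 ⟨fun h => hd₀ne h.symm, hrd₀A⟩
      have hcardU' : U'.card = U.card - 1 := Finset.card_erase_of_mem huU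
      have hA'rev : ∀ e ∈ A', rev e ∈ A' := by
        intro e he
        rw [hmemA'] at he ⊢
        refine ⟨hArev e he.1, ?_, ?_⟩
        · intro h; exact he.2.2 (by rw [← hrev e, h])
        · intro h; exact he.2.1 (by rw [← hrev e, h, hrev])
      have hend' : ∀ e ∈ A', hd e ∈ U' := by
        intro e he
        rw [hmemA'] at he
        refine Finset.mem_erase.2 ⟨?_, hend e he.1⟩
        intro h
        exact he.2.1 (huniq e he.1 h)
      have hconn' : ∀ p ∈ U', ∀ q ∈ U',
          Relation.ReflTransGen (fun x y => ∃ d ∈ A', tl d = x ∧ hd d = y) p q := by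
        intro p hp q hq
        have hp' := Finset.mem_erase.1 hp
        have hq' := Finset.mem_erase.1 hq
        have h := @EFL_avoid_leaf D V _ _ rev hrev hrevne hd tl hcompat A hArev u d₀ hd₀A huniq hd₀u
          p q (hconn p hp'.2 q hq'.2) hq'.1
        exact h.1 hp'.1
      -- the leaf dart has zero value
      have hfilter : A.filter (fun d => hd d = u) = {d₀} := by
        apply Finset.eq_singleton_iff_unique_mem.2
        exact ⟨Finset.mem_filter.2 ⟨hd₀A, hd₀u⟩,
          fun e he => huniq e (Finset.mem_filter.1 he).1 (Finset.mem_filter.1 he).2⟩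
      have hβd₀ : β d₀ = 0 := by
        have := hsum u
        rw [hfilter, Finset.sum_singleton] at this
        exact this
      have hβrd₀ : β (rev d₀) = 0 := by rw [hanti, hβd₀, neg_zero]
      have hsum' : ∀ v, ∑ d ∈ A'.filter (fun d => hd d = v), β d = 0 := by
        intro v
        rw [← hsum v]
        apply Finset.sum_subset
        · apply Finset.filter_subset_filter
          intro e he
          exact ((hmemA' e).1 he).1
        · intro e he hne
          have heA := Finset.mem_filter.1 he
          by_cases h1 : e = d₀
          · rw [h1]; exact hβd₀
          · by_cases h2 : e = rev d₀
            · rw [h2]; exact hβrd₀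
            · exact absurd (Finset.mem_filter.2
                ⟨(hmemA' e).2 ⟨heA.1, h1, h2⟩, heA.2⟩) hne
      have hA'zero := ih U' A' β (by omega) ⟨t, Finset.mem_erase.2 ⟨htne, htU⟩⟩
        hA'rev hend' hconn' (by omega) hanti hsum'
      intro d hdA
      by_cases h1 : d = d₀
      · rw [h1]; exact hβd₀
      · by_cases h2 : d = rev d₀
        · rw [h2]; exact hβrd₀
        · exact hA'zero d ((hmemA' d).2 ⟨hdA, h1, h2⟩)

end EFLtree

section EFLsurf

variable (S : CombSurface)

lemma EFL_left_rev (d : S.D) : S.left (S.rev d) = S.right d := rfl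

lemma EFL_right_rev (d : S.D) : S.right (S.rev d) = S.left d := by
  show S.left (S.rev (S.rev d)) = S.left d
  rw [S.rev_invol]

lemma EFL_sum_rev (φ : S.D → ℝ) : ∑ d, φ (S.rev d) = ∑ d, φ d :=
  Fintype.sum_equiv (Function.Involutive.toPerm S.rev S.rev_invol) _ _ (fun _ => rfl)

lemma EFL_imbalance_eq (φ : S.D → ℝ) (v : S.V) :
    S.imbalance φ v = ∑ d ∈ univ.filter (fun d => S.head d = v), (φ d - φ (S.rev d)) := by
  unfold CombSurface.imbalance
  rw [Finset.sum_sub_distrib]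
  congr 1
  refine Finset.sum_nbij' (fun d => S.rev d) (fun d => S.rev d) ?_ ?_ ?_ ?_ ?_
  · intro d hd
    simp only [Finset.mem_filter, Finset.mem_univ, true_and] at hd ⊢
    exact hd
  · intro d hd
    simp only [Finset.mem_filter, Finset.mem_univ, true_and] at hd ⊢
    show S.head (S.rev (S.rev d)) = v
    rwa [S.rev_invol]
  · intro d _; exact S.rev_invol d
  · intro d _; exact S.rev_invol d
  · intro d _
    rw [S.rev_invol]

lemma EFL_telescope (ψ : S.F → ℝ) (v : S.V) :
    ∑ d ∈ univ.filter (fun d => S.head d = v), ψ (S.right d)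
      = ∑ d ∈ univ.filter (fun d => S.head d = v), ψ (S.left d) := by
  have hnext := S.next_bij
  set π := Equiv.ofBijective S.next hnext with hπ
  refine (Finset.sum_nbij' (fun d => S.next d) (fun d => π.symm d) ?_ ?_ ?_ ?_ ?_).symm
  · intro d hd
    simp only [Finset.mem_filter, Finset.mem_univ, true_and] at hd ⊢
    rw [S.head_next]; exact hd
  · intro d hd
    simp only [Finset.mem_filter, Finset.mem_univ, true_and] at hd ⊢
    have h1 : S.head (S.next (π.symm d)) = S.head (π.symm d) := S.head_next _
    have h2 : S.next (π.symm d) = d := π.apply_symm_apply d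
    rw [h2] at h1
    rw [← h1]; exact hd
  · intro d _; exact π.symm_apply_apply d
  · intro d _; exact π.apply_symm_apply d
  · intro d _
    show ψ (S.left d) = ψ (S.right (S.next d))
    have : S.right (S.next d) = S.left d := by
      show S.left (S.rev (S.next d)) = S.left d
      exact S.left_step d
    rw [this]

lemma EFL_crossing (z : S.D → ℝ) (hzanti : ∀ d, z (S.rev d) = - z d) (F'' : Finset S.F) :
    ∑ q ∈ F'', S.dualImbalance z q
      = ∑ d ∈ univ.filter (fun d => S.left d ∉ F'' ∧ S.right d ∈ F''), z d := by
  have h1 : ∑ q ∈ F'', S.dualImbalance z q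
      = ∑ d ∈ univ.filter (fun d => S.right d ∈ F''), z d := by
    rw [← Finset.sum_fiberwise_of_maps_to (g := S.right)
      (fun d hd => (Finset.mem_filter.1 hd).2)]
    refine Finset.sum_congr rfl fun q hq => ?_
    unfold CombSurface.dualImbalance
    refine Finset.sum_congr ?_ (fun _ _ => rfl)
    ext d
    simp only [Finset.mem_filter, Finset.mem_univ, true_and]
    constructor
    · intro h; exact ⟨by rw [h]; exact hq, h⟩
    · rintro ⟨_, h⟩; exact h
  rw [h1]
  have h2 : ∑ d ∈ (univ.filter (fun d => S.right d ∈ F'')).filter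
      (fun d => S.left d ∈ F''), z d = 0 := by
    apply Finset.sum_involution (fun d _ => S.rev d)
    · intro d hd
      rw [hzanti]; ring
    · intro d hd hz
      exact fun h => (S.rev_ne d) h
    · intro d hd
      simp only [Finset.mem_filter, Finset.mem_univ, true_and] at hd ⊢
      constructor
      · show S.left (S.rev (S.rev d)) ∈ F''
        rw [S.rev_invol]; exact hd.2
      · show S.left (S.rev d) ∈ F''
        exact hd.1
    · intro d hd; exact S.rev_invol d
  have h3 := Finset.sum_filter_add_sum_filter_not
    (univ.filter (fun d => S.right d ∈ F'')) (fun d => S.left d ∈ F'') z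
  have h4 : (univ.filter (fun d => S.right d ∈ F'')).filter (fun d => ¬ S.left d ∈ F'')
      = univ.filter (fun d => S.left d ∉ F'' ∧ S.right d ∈ F'') := by
    ext d
    simp only [Finset.mem_filter, Finset.mem_univ, true_and]
    tauto
  rw [h2, h4] at h3
  linarith

lemma EFL_fcf_apply (H : HomologyBasis S) (z : S.D → ℝ) (c : S.D → ℝ) (f : S.D → ℝ)
    (i : Fin (2 * S.g + 3)) :
    flowCostFull S H z c f i = ∑ d, f d * dartCostFull S H z c d i := by
  unfold flowCostFull
  rw [Finset.sum_apply]
  refine Finset.sum_congr rfl fun d _ => ?_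
  simp [smul_eq_mul]

lemma EFL_dc_one (H : HomologyBasis S) (z : S.D → ℝ) (c : S.D → ℝ) (d : S.D) :
    dartCostFull S H z c d ⟨1, by omega⟩ = 1 := by
  unfold dartCostFull
  have : (⟨1, by omega⟩ : Fin (2 * S.g + 3)) = Fin.succ 0 := rfl
  rw [this, Fin.cons_succ, Fin.cons_zero]

lemma EFL_dc_hom (H : HomologyBasis S) (z : S.D → ℝ) (c : S.D → ℝ) (d : S.D)
    (i : Fin (2 * S.g)) :
    dartCostFull S H z c d ⟨(i : ℕ) + 2, by omega⟩ = (H.cyc i d : ℝ) := by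
  unfold dartCostFull
  have h1 : (⟨(i : ℕ) + 2, by omega⟩ : Fin (2 * S.g + 3))
      = Fin.succ (Fin.succ ⟨(i : ℕ), by omega⟩) := rfl
  rw [h1, Fin.cons_succ, Fin.cons_succ]
  have h2 : (⟨(i : ℕ), by omega⟩ : Fin (2 * S.g + 1)) = Fin.castSucc ⟨(i : ℕ), i.isLt⟩ := rfl
  rw [h2, Fin.snoc_castSucc]

lemma EFL_dc_last (H : HomologyBasis S) (z : S.D → ℝ) (c : S.D → ℝ) (d : S.D) :
    dartCostFull S H z c d ⟨2 * S.g + 2, by omega⟩ = z d := by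
  unfold dartCostFull
  have h1 : (⟨2 * S.g + 2, by omega⟩ : Fin (2 * S.g + 3))
      = Fin.succ (Fin.succ ⟨2 * S.g, by omega⟩) := rfl
  rw [h1, Fin.cons_succ, Fin.cons_succ]
  have h2 : (⟨2 * S.g, by omega⟩ : Fin (2 * S.g + 1)) = Fin.last (2 * S.g) := rfl
  rw [h2, Fin.snoc_last]

end EFLsurf

lemma EFL_least_nonzero {n : ℕ} (W : Fin n → ℝ) (hW : W ≠ 0) :
    ∃ i, (∀ j, j < i → W j = 0) ∧ W i ≠ 0 := by
  have hne : (univ.filter (fun i => W i ≠ 0)).Nonempty := by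
    obtain ⟨i, hi⟩ := Function.ne_iff.1 hW
    exact ⟨i, by simpa using hi⟩
  refine ⟨(univ.filter (fun i => W i ≠ 0)).min' hne, ?_, ?_⟩
  · intro j hj
    by_contra h
    exact absurd (Finset.min'_le _ j (by simpa using h)) (not_le.2 hj)
  · have := Finset.min'_mem (univ.filter (fun i => W i ≠ 0)) hne
    exact (Finset.mem_filter.1 this).2


/-- The generic pushing lemma: an augmenting structure `σ` with nonzero perturbed cost
yields a flow cheaper than `f₁` or `f₂`. -/
lemma EFL_push (S : CombSurface) (H : HomologyBasis S) (z : S.D → ℝ) (c : S.D → ℝ)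
    (μ : S.D → ENNReal) (b : S.V → ℝ) (f₁ f₂ : S.D → ℝ)
    (h₁ : Feasible S μ b f₁) (h₂ : Feasible S μ b f₂)
    (σ : S.D → ℝ)
    (hσ1 : ∀ e, σ e = 1 ∨ σ e = 0 ∨ σ e = -1)
    (hpos : ∀ e, σ e = 1 → f₂ e < f₁ e)
    (hneg : ∀ e, σ e = -1 → f₁ e < f₂ e)
    (himb : ∀ v, ∑ d ∈ univ.filter (fun d => S.head d = v), (σ d - σ (S.rev d)) = 0)
    (hW : (∑ e, σ e • dartCostFull S H z c e) ≠ 0) :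
    ∃ f, Feasible S μ b f ∧
      (lexLt (flowCostFull S H z c f) (flowCostFull S H z c f₁) ∨
        lexLt (flowCostFull S H z c f) (flowCostFull S H z c f₂)) := by
  classical
  set W := ∑ e, σ e • dartCostFull S H z c e with hWdef
  -- σ is somewhere nonzero
  have hσne : (univ.filter (fun e => σ e ≠ 0)).Nonempty := by
    by_contra hno
    rw [Finset.not_nonempty_iff_eq_empty, Finset.filter_eq_empty_iff] at hno
    apply hW
    rw [hWdef]
    refine Finset.sum_eq_zero fun e _ => ?_
    rw [not_not.1 (hno (Finset.mem_univ e)), zero_smul]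
  set ε := (univ.filter (fun e => σ e ≠ 0)).inf' hσne (fun e => |f₁ e - f₂ e|) with hεdef
  have hε0 : 0 < ε := by
    rw [hεdef, Finset.lt_inf'_iff]
    intro e he
    have he' := (Finset.mem_filter.1 he).2
    rcases hσ1 e with h | h | h
    · have := hpos e h; rw [abs_of_pos (by linarith)]; linarith
    · exact absurd h he'
    · have := hneg e h; rw [abs_of_neg (by linarith)]; linarith
  have hεle : ∀ e, σ e ≠ 0 → ε ≤ |f₁ e - f₂ e| := by
    intro e he
    exact Finset.inf'_le _ (Finset.mem_filter.2 ⟨Finset.mem_univ e, he⟩)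
  -- the two candidate flows
  set g₁ := fun e => f₁ e - ε * σ e with hg₁def
  set g₂ := fun e => f₂ e + ε * σ e with hg₂def
  -- pointwise bounds
  have hbounds : ∀ e, (0 ≤ g₁ e ∧ g₁ e ≤ max (f₁ e) (f₂ e)) ∧
      (0 ≤ g₂ e ∧ g₂ e ≤ max (f₁ e) (f₂ e)) := by
    intro e
    have h1e := (h₁.1 e).1
    have h2e := (h₂.1 e).1
    rcases hσ1 e with h | h | h
    · have hlt := hpos e h
      have hle := hεle e (by rw [h]; norm_num)
      rw [abs_of_pos (by linarith)] at hle
      constructor <;> constructor <;>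
        simp only [hg₁def, hg₂def, h, mul_one, le_max_iff] <;>
        first
          | linarith
          | (left; linarith)
    · constructor <;> constructor <;>
        simp only [hg₁def, hg₂def, h, mul_zero, sub_zero, add_zero, le_max_iff] <;>
        first
          | linarith
          | (left; linarith)
          | (right; linarith)
    · have hlt := hneg e h
      have hle := hεle e (by rw [h]; norm_num)
      rw [abs_of_neg (by linarith)] at hle
      constructor <;> constructor <;>
        simp only [hg₁def, hg₂def, h, mul_neg_one, sub_neg_eq_add, le_max_iff] <;>
        first
          | linarith
          | (left; linarith)
          | (right; linarith)
  have hcap : ∀ f : S.D → ℝ, (∀ e, 0 ≤ f e ∧ f e ≤ max (f₁ e) (f₂ e)) →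
      ∀ e, 0 ≤ f e ∧ ENNReal.ofReal (f e) ≤ μ e := by
    intro f hf e
    refine ⟨(hf e).1, ?_⟩
    rcases le_total (f₁ e) (f₂ e) with h | h
    · calc ENNReal.ofReal (f e) ≤ ENNReal.ofReal (f₂ e) := by
            apply ENNReal.ofReal_le_ofReal
            have := (hf e).2
            rw [max_eq_right h] at this
            exact this
        _ ≤ μ e := (h₂.1 e).2
    · calc ENNReal.ofReal (f e) ≤ ENNReal.ofReal (f₁ e) := by
            apply ENNReal.ofReal_le_ofReal
            have := (hf e).2
            rw [max_eq_left h] at this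
            exact this
        _ ≤ μ e := (h₁.1 e).2
  -- imbalances
  have himb₁ : ∀ v, S.imbalance g₁ v = b v := by
    intro v
    rw [EFL_imbalance_eq]
    have : ∀ d, g₁ d - g₁ (S.rev d)
        = (f₁ d - f₁ (S.rev d)) - ε * (σ d - σ (S.rev d)) := by
      intro d; simp only [hg₁def]; ring
    rw [Finset.sum_congr rfl (fun d _ => this d), Finset.sum_sub_distrib,
      ← Finset.mul_sum, himb v, mul_zero, sub_zero, ← EFL_imbalance_eq]
    exact h₁.2 v
  have himb₂ : ∀ v, S.imbalance g₂ v = b v := by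
    intro v
    rw [EFL_imbalance_eq]
    have : ∀ d, g₂ d - g₂ (S.rev d)
        = (f₂ d - f₂ (S.rev d)) + ε * (σ d - σ (S.rev d)) := by
      intro d; simp only [hg₂def]; ring
    rw [Finset.sum_congr rfl (fun d _ => this d), Finset.sum_add_distrib,
      ← Finset.mul_sum, himb v, mul_zero, add_zero, ← EFL_imbalance_eq]
    exact h₂.2 v
  have hfeas₁ : Feasible S μ b g₁ :=
    ⟨hcap g₁ (fun e => (hbounds e).1), himb₁⟩
  have hfeas₂ : Feasible S μ b g₂ :=
    ⟨hcap g₂ (fun e => (hbounds e).2), himb₂⟩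
  -- costs
  have hcost₁ : ∀ i, flowCostFull S H z c g₁ i = flowCostFull S H z c f₁ i - ε * W i := by
    intro i
    rw [EFL_fcf_apply, EFL_fcf_apply]
    have hWi : W i = ∑ e, σ e * dartCostFull S H z c e i := by
      rw [hWdef, Finset.sum_apply]
      exact Finset.sum_congr rfl fun e _ => by simp [smul_eq_mul]
    rw [hWi, Finset.mul_sum, ← Finset.sum_sub_distrib]
    refine Finset.sum_congr rfl fun e _ => ?_
    simp only [hg₁def]; ring
  have hcost₂ : ∀ i, flowCostFull S H z c g₂ i = flowCostFull S H z c f₂ i + ε * W i := by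
    intro i
    rw [EFL_fcf_apply, EFL_fcf_apply]
    have hWi : W i = ∑ e, σ e * dartCostFull S H z c e i := by
      rw [hWdef, Finset.sum_apply]
      exact Finset.sum_congr rfl fun e _ => by simp [smul_eq_mul]
    rw [hWi, Finset.mul_sum, ← Finset.sum_add_distrib]
    refine Finset.sum_congr rfl fun e _ => ?_
    simp only [hg₂def]; ring
  obtain ⟨i, hzero, hnz⟩ := EFL_least_nonzero W hW
  rcases lt_or_gt_of_ne hnz with hlt | hgt
  · refine ⟨g₂, hfeas₂, Or.inr ⟨i, ?_, ?_⟩⟩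
    · intro j hj
      rw [hcost₂ j, hzero j hj, mul_zero, add_zero]
    · rw [hcost₂ i]
      nlinarith
  · refine ⟨g₁, hfeas₁, Or.inl ⟨i, ?_, ?_⟩⟩
    · intro j hj
      rw [hcost₁ j, hzero j hj, mul_zero, sub_zero]
    · rw [hcost₁ i]
      nlinarith


/-- Pushing on a two-sided edge. -/
lemma EFL_pushPair (S : CombSurface) (H : HomologyBasis S) (z : S.D → ℝ) (c : S.D → ℝ)
    (μ : S.D → ENNReal) (b : S.V → ℝ) (f₁ f₂ : S.D → ℝ)
    (h₁ : Feasible S μ b f₁) (h₂ : Feasible S μ b f₂)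
    (e₀ : S.D) (he : f₂ e₀ < f₁ e₀) (he' : f₂ (S.rev e₀) < f₁ (S.rev e₀)) :
    ∃ f, Feasible S μ b f ∧
      (lexLt (flowCostFull S H z c f) (flowCostFull S H z c f₁) ∨
        lexLt (flowCostFull S H z c f) (flowCostFull S H z c f₂)) := by
  classical
  set σ := fun x => if x = e₀ ∨ x = S.rev e₀ then (1 : ℝ) else 0 with hσdef
  have hmem : ∀ x, σ x = 1 ↔ (x = e₀ ∨ x = S.rev e₀) := by
    intro x
    simp only [hσdef]
    split
    · rename_i h; simp [h]
    · rename_i h; simp [h]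
  refine EFL_push S H z c μ b f₁ f₂ h₁ h₂ σ ?_ ?_ ?_ ?_ ?_
  · intro x
    simp only [hσdef]
    split <;> simp
  · intro x hx
    rcases (hmem x).1 hx with h | h
    · rw [h]; exact he
    · rw [h]; exact he'
  · intro x hx
    simp only [hσdef] at hx
    split at hx <;> norm_num at hx
  · intro v
    refine Finset.sum_eq_zero fun d _ => ?_
    have hkey : (S.rev d = e₀ ∨ S.rev d = S.rev e₀) ↔ (d = e₀ ∨ d = S.rev e₀) := by
      constructor
      · rintro (h | h)
        · right; rw [← h, S.rev_invol]
        · left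
          have := congrArg S.rev h
          rwa [S.rev_invol, S.rev_invol] at this
      · rintro (h | h)
        · right; rw [h]
        · left; rw [h, S.rev_invol]
    have : σ (S.rev d) = σ d := by
      simp only [hσdef]
      exact if_congr hkey rfl rfl
    rw [this]; ring
  · intro h0
    have h1 := congrFun h0 ⟨1, by omega⟩
    rw [Finset.sum_apply] at h1
    simp only [Pi.smul_apply, smul_eq_mul, Pi.zero_apply] at h1
    rw [Finset.sum_congr rfl (fun x _ => by rw [EFL_dc_one])] at h1
    simp only [mul_one] at h1
    have hsum : ∑ x, σ x = 2 := by
      have : ∀ x : S.D, σ x = if x ∈ ({e₀, S.rev e₀} : Finset S.D) then (1:ℝ) else 0 := by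
        intro x
        simp only [hσdef, Finset.mem_insert, Finset.mem_singleton]
      rw [Finset.sum_congr rfl (fun x _ => this x), Finset.sum_ite_mem,
        Finset.univ_inter, Finset.sum_const, Finset.card_pair (S.rev_ne e₀).symm]
      norm_num
    rw [hsum] at h1
    norm_num at h1

/-- Pushing around a set of faces all of whose inward crossing darts are residual. -/
lemma EFL_pushSet (S : CombSurface) (H : HomologyBasis S) (z : S.D → ℝ)
    (hzanti : ∀ d, z (S.rev d) = - z d) (c : S.D → ℝ)
    (μ : S.D → ENNReal) (b : S.V → ℝ) (f₁ f₂ : S.D → ℝ)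
    (h₁ : Feasible S μ b f₁) (h₂ : Feasible S μ b f₂)
    (F'' : Finset S.F)
    (hsum : (∑ q ∈ F'', S.dualImbalance z q) ≠ 0)
    (hres : ∀ d, S.left d ∉ F'' → S.right d ∈ F'' → (f₂ d < f₁ d ∨ f₁ (S.rev d) < f₂ (S.rev d))) :
    ∃ f, Feasible S μ b f ∧
      (lexLt (flowCostFull S H z c f) (flowCostFull S H z c f₁) ∨
        lexLt (flowCostFull S H z c f) (flowCostFull S H z c f₂)) := by
  classical
  -- `InX d`: d crosses into `F''`
  set InX := fun d => S.left d ∉ F'' ∧ S.right d ∈ F'' with hInX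
  have hInXrev : ∀ d, InX (S.rev d) ↔ (S.right d ∉ F'' ∧ S.left d ∈ F'') := by
    intro d
    rw [hInX]
    simp only [EFL_left_rev, EFL_right_rev]
  have hdisj : ∀ d, InX d → ¬ InX (S.rev d) := by
    intro d hd hrd
    rw [hInXrev d] at hrd
    exact hrd.1 hd.2
  set σ := fun x => if InX x ∧ f₂ x < f₁ x then (1 : ℝ)
    else if InX (S.rev x) ∧ ¬ f₂ (S.rev x) < f₁ (S.rev x) then -1 else 0 with hσdef
  have hσ_eq1 : ∀ x, InX x → f₂ x < f₁ x → σ x = 1 := by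
    intro x h hf
    simp only [hσdef]
    rw [if_pos ⟨h, hf⟩]
  have hσ_eqm : ∀ x, InX (S.rev x) → ¬ f₂ (S.rev x) < f₁ (S.rev x) → σ x = -1 := by
    intro x h hf
    simp only [hσdef]
    rw [if_neg (fun hc => hdisj x hc.1 h), if_pos ⟨h, hf⟩]
  have hσ_eq0 : ∀ x, ¬ (InX x ∧ f₂ x < f₁ x) →
      ¬ (InX (S.rev x) ∧ ¬ f₂ (S.rev x) < f₁ (S.rev x)) → σ x = 0 := by
    intro x hA hB
    simp only [hσdef]
    rw [if_neg hA, if_neg hB]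
  refine EFL_push S H z c μ b f₁ f₂ h₁ h₂ σ ?_ ?_ ?_ ?_ ?_
  · intro x
    simp only [hσdef]
    split
    · left; rfl
    · split
      · right; right; rfl
      · right; left; rfl
  · intro x hx
    simp only [hσdef] at hx
    split at hx
    · rename_i h; exact h.2
    · split at hx <;> norm_num at hx
  · intro x hx
    simp only [hσdef] at hx
    split at hx
    · norm_num at hx
    · split at hx
      · rename_i h1 h2
        have := hres (S.rev x) h2.1.1 h2.1.2
        rw [S.rev_invol] at this
        rcases this with h | h
        · exact absurd h h2.2
        · exact h
      · norm_num at hx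
  · intro v
    have hptwise : ∀ d, σ d - σ (S.rev d)
        = (if S.right d ∈ F'' then (1:ℝ) else 0) - (if S.left d ∈ F'' then (1:ℝ) else 0) := by
      intro d
      have hrrd : S.rev (S.rev d) = d := S.rev_invol d
      by_cases hl : S.left d ∈ F'' <;> by_cases hr : S.right d ∈ F''
      · -- both in
        have h1 : ¬ InX d := fun h => h.1 hl
        have h2 : ¬ InX (S.rev d) := fun h => ((hInXrev d).1 h).1 hr
        have e1 : σ d = 0 := hσ_eq0 d (fun h => h1 h.1) (fun h => h2 h.1)
        have e2 : σ (S.rev d) = 0 := hσ_eq0 (S.rev d) (fun h => h2 h.1)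
          (fun h => h1 (by rw [hrrd] at h; exact h.1))
        rw [e1, e2, if_pos hl, if_pos hr]
        norm_num
      · -- left in, right out
        have h1 : ¬ InX d := fun h => hr h.2
        have h2 : InX (S.rev d) := (hInXrev d).2 ⟨hr, hl⟩
        by_cases hf : f₂ (S.rev d) < f₁ (S.rev d)
        · have e1 : σ d = 0 := hσ_eq0 d (fun h => h1 h.1) (fun h => h.2 hf)
          have e2 : σ (S.rev d) = 1 := hσ_eq1 (S.rev d) h2 hf
          rw [e1, e2, if_pos hl, if_neg hr]
        · have e1 : σ d = -1 := hσ_eqm d h2 hf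
          have e2 : σ (S.rev d) = 0 := hσ_eq0 (S.rev d) (fun h => hf h.2)
            (fun h => h1 (by rw [hrrd] at h; exact h.1))
          rw [e1, e2, if_pos hl, if_neg hr]
          ring
      · -- left out, right in
        have h1 : InX d := ⟨hl, hr⟩
        have h2 : ¬ InX (S.rev d) := hdisj d h1
        by_cases hf : f₂ d < f₁ d
        · have e1 : σ d = 1 := hσ_eq1 d h1 hf
          have e2 : σ (S.rev d) = 0 := hσ_eq0 (S.rev d) (fun h => h2 h.1)
            (fun h => (by rw [hrrd] at h; exact h.2 hf))
          rw [e1, e2, if_neg hl, if_pos hr]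
        · have e1 : σ d = 0 := hσ_eq0 d (fun h => hf h.2) (fun h => h2 h.1)
          have e2 : σ (S.rev d) = -1 := hσ_eqm (S.rev d)
            (by rw [hrrd]; exact h1) (by rw [hrrd]; exact hf)
          rw [e1, e2, if_neg hl, if_pos hr]
          ring
      · -- both out
        have h1 : ¬ InX d := fun h => hr h.2
        have h2 : ¬ InX (S.rev d) := fun h => hl ((hInXrev d).1 h).2
        have e1 : σ d = 0 := hσ_eq0 d (fun h => h1 h.1) (fun h => h2 h.1)
        have e2 : σ (S.rev d) = 0 := hσ_eq0 (S.rev d) (fun h => h2 h.1)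
          (fun h => h1 (by rw [hrrd] at h; exact h.1))
        rw [e1, e2, if_neg hl, if_neg hr]
    rw [Finset.sum_congr rfl (fun d _ => hptwise d), Finset.sum_sub_distrib]
    rw [EFL_telescope S (fun q => if q ∈ F'' then (1:ℝ) else 0) v]
    ring
  · -- W ≠ 0 via the last coordinate
    intro h0
    have h1 := congrFun h0 ⟨2 * S.g + 2, by omega⟩
    rw [Finset.sum_apply] at h1
    simp only [Pi.smul_apply, smul_eq_mul, Pi.zero_apply] at h1
    rw [Finset.sum_congr rfl (fun x _ => by rw [EFL_dc_last])] at h1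
    have hsplit : ∀ x, σ x * z x
        = (if InX x ∧ f₂ x < f₁ x then z x else 0)
          + (if InX (S.rev x) ∧ ¬ f₂ (S.rev x) < f₁ (S.rev x) then -z x else 0) := by
      intro x
      by_cases hA : InX x ∧ f₂ x < f₁ x
      · have hB : ¬ (InX (S.rev x) ∧ ¬ f₂ (S.rev x) < f₁ (S.rev x)) :=
          fun h => hdisj x hA.1 h.1
        rw [hσ_eq1 x hA.1 hA.2, if_pos hA, if_neg hB]
        ring
      · by_cases hB : InX (S.rev x) ∧ ¬ f₂ (S.rev x) < f₁ (S.rev x)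
        · rw [hσ_eqm x hB.1 hB.2, if_neg hA, if_pos hB]
          ring
        · rw [hσ_eq0 x hA hB, if_neg hA, if_neg hB]
          ring
    rw [Finset.sum_congr rfl (fun x _ => hsplit x), Finset.sum_add_distrib] at h1
    have hreindex : ∑ x, (if InX (S.rev x) ∧ ¬ f₂ (S.rev x) < f₁ (S.rev x) then -z x else 0)
        = ∑ x, (if InX x ∧ ¬ f₂ x < f₁ x then z x else 0) := by
      rw [← EFL_sum_rev S (fun x => if InX x ∧ ¬ f₂ x < f₁ x then z x else 0)]
      refine Finset.sum_congr rfl fun x _ => ?_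
      by_cases h : InX (S.rev x) ∧ ¬ f₂ (S.rev x) < f₁ (S.rev x)
      · rw [if_pos h, if_pos h, hzanti]
      · rw [if_neg h, if_neg h]
    rw [hreindex] at h1
    have hcomb : ∀ x, (if InX x ∧ f₂ x < f₁ x then z x else 0)
        + (if InX x ∧ ¬ f₂ x < f₁ x then z x else 0)
        = if InX x then z x else 0 := by
      intro x
      by_cases hI : InX x
      · by_cases hf : f₂ x < f₁ x
        · rw [if_pos ⟨hI, hf⟩, if_neg (fun h => h.2 hf), if_pos hI]
          ring
        · rw [if_neg (fun h => hf h.2), if_pos ⟨hI, hf⟩, if_pos hI]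
          ring
      · rw [if_neg (fun h => hI h.1), if_neg (fun h => hI h.1), if_neg hI]
        ring
    rw [← Finset.sum_add_distrib, Finset.sum_congr rfl (fun x _ => hcomb x)] at h1
    rw [← Finset.sum_filter] at h1
    rw [EFL_crossing S z hzanti F''] at hsum
    exact hsum h1

/-- Lemma 4 of the paper.  Let `f₁` and `f₂` be distinct feasible flows
with respect to capacities `μ` and demands `b`.  Then there exists a feasible flow `f`
such that at least one of `c'(f) < c'(f₁)` or `c'(f) < c'(f₂)` holds, where the perturbed
cost vectors are compared lexicographically. -/
theorem holiest_something_cheaper (S : CombSurface) (H : HomologyBasis S) (z : S.D → ℝ)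
    (r : S.F) (hz : S.IsDrainage z r) (c : S.D → ℝ) (μ : S.D → ENNReal) (b : S.V → ℝ)
    (f₁ f₂ : S.D → ℝ) (h₁ : Feasible S μ b f₁) (h₂ : Feasible S μ b f₂)
    (hne : f₁ ≠ f₂) :
    ∃ f, Feasible S μ b f ∧
      (lexLt (flowCostFull S H z c f) (flowCostFull S H z c f₁) ∨
        lexLt (flowCostFull S H z c f) (flowCostFull S H z c f₂)) := by
  classical
  rcases em (flowCostFull S H z c f₁ = flowCostFull S H z c f₂) with heq | hneq
  case inr =>
    -- unequal costs: one of the two flows is already cheaper than the other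
    obtain ⟨i, h0, hnz⟩ := EFL_least_nonzero
      (fun j => flowCostFull S H z c f₁ j - flowCostFull S H z c f₂ j) (by
        intro h
        apply hneq
        funext j
        have := congrFun h j
        simp only [Pi.zero_apply] at this
        linarith)
    rcases lt_or_gt_of_ne hnz with h | h
    · exact ⟨f₁, h₁, Or.inr ⟨i, fun j hj => by
        have := h0 j hj; simp only [sub_eq_zero] at this; exact this,
        by simp only [sub_neg] at h; exact h⟩⟩
    · exact ⟨f₂, h₂, Or.inl ⟨i, fun j hj => by
        have := h0 j hj; simp only [sub_eq_zero] at this; exact this.symm,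
        by simp only [gt_iff_lt, sub_pos] at h; exact h⟩⟩
  case inl =>
  set a := fun d => (f₁ d - f₂ d) - (f₁ (S.rev d) - f₂ (S.rev d)) with hadef
  have hanti_a : ∀ d, a (S.rev d) = - a d := by
    intro d
    simp only [hadef, S.rev_invol]
    ring
  by_cases hazero : ∀ d, a d = 0
  · -- the difference is symmetric on every edge
    obtain ⟨e, he⟩ := Function.ne_iff.1 hne
    have hsym : f₁ e - f₂ e = f₁ (S.rev e) - f₂ (S.rev e) := by
      have := hazero e
      simp only [hadef] at this
      linarith
    rcases lt_or_gt_of_ne he with h | h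
    · obtain ⟨f, hf, hor⟩ := EFL_pushPair S H z c μ b f₂ f₁ h₂ h₁ e (by linarith) (by linarith)
      exact ⟨f, hf, hor.symm⟩
    · exact EFL_pushPair S H z c μ b f₁ f₂ h₁ h₂ e (by linarith) (by linarith)
  · push_neg at hazero
    obtain ⟨d₀, hd₀⟩ := hazero
    set relLe := fun (p q : S.F) => ∃ d, S.left d = p ∧ S.right d = q ∧ a d ≤ 0 with hrelLe
    set relGe := fun (p q : S.F) => ∃ d, S.left d = p ∧ S.right d = q ∧ 0 ≤ a d with hrelGe
    by_cases hR : ∀ q, Relation.ReflTransGen relLe r q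
    · by_cases hR2 : ∀ q, Relation.ReflTransGen relGe r q
      · -- dead case: `a` is a boundary circulation that must vanish, contradiction
        exfalso
        -- homology signature of the difference vanishes
        have key : ∀ (i : Fin (2 * S.g)) (f : S.D → ℝ),
            flowCostFull S H z c f ⟨(i : ℕ) + 2, by omega⟩
              = ∑ d, f d * (H.cyc i d : ℝ) := by
          intro i f
          rw [EFL_fcf_apply]
          exact Finset.sum_congr rfl fun d _ => by rw [EFL_dc_hom]
        have hsig : ∀ i : Fin (2 * S.g), ∑ d, (f₁ d - f₂ d) * (H.cyc i d : ℝ) = 0 := by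
          intro i
          have h1 := congrFun heq ⟨(i : ℕ) + 2, by omega⟩
          rw [key i f₁, key i f₂] at h1
          have h2 : ∑ d, (f₁ d - f₂ d) * (H.cyc i d : ℝ)
              = (∑ d, f₁ d * (H.cyc i d : ℝ)) - ∑ d, f₂ d * (H.cyc i d : ℝ) := by
            rw [← Finset.sum_sub_distrib]
            exact Finset.sum_congr rfl fun d _ => by ring
          rw [h2, h1, sub_self]
        have hsiga : ∀ i : Fin (2 * S.g), ∑ d, a d * (H.cyc i d : ℝ) = 0 := by
          intro i
          have hrei : ∑ d, (f₁ (S.rev d) - f₂ (S.rev d)) * (H.cyc i d : ℝ)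
              = ∑ d, (f₁ d - f₂ d) * (-(H.cyc i d : ℝ)) := by
            rw [← EFL_sum_rev S (fun d => (f₁ d - f₂ d) * (-(H.cyc i d : ℝ)))]
            refine Finset.sum_congr rfl fun d _ => ?_
            rw [H.cyc_antisym]
            push_cast
            ring
          have expand : ∑ d, a d * (H.cyc i d : ℝ)
              = (∑ d, (f₁ d - f₂ d) * (H.cyc i d : ℝ))
                - ∑ d, (f₁ (S.rev d) - f₂ (S.rev d)) * (H.cyc i d : ℝ) := by
            rw [← Finset.sum_sub_distrib]
            refine Finset.sum_congr rfl fun d _ => ?_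
            simp only [hadef]
            ring
          have hneg : ∑ d, (f₁ d - f₂ d) * (-(H.cyc i d : ℝ))
              = - ∑ d, (f₁ d - f₂ d) * (H.cyc i d : ℝ) := by
            rw [← Finset.sum_neg_distrib]
            exact Finset.sum_congr rfl fun d _ => by ring
          rw [expand, hrei, hneg, hsig i]
          ring
        -- `a` is a circulation
        have hcircA : ∀ v, ∑ d ∈ univ.filter (fun d => S.head d = v), a d = 0 := by
          intro v
          have h1 : ∑ d ∈ univ.filter (fun d => S.head d = v), (f₁ d - f₁ (S.rev d)) = b v := by
            rw [← EFL_imbalance_eq]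
            exact h₁.2 v
          have h2 : ∑ d ∈ univ.filter (fun d => S.head d = v), (f₂ d - f₂ (S.rev d)) = b v := by
            rw [← EFL_imbalance_eq]
            exact h₂.2 v
          have h3 : ∑ d ∈ univ.filter (fun d => S.head d = v), a d
              = (∑ d ∈ univ.filter (fun d => S.head d = v), (f₁ d - f₁ (S.rev d)))
                - ∑ d ∈ univ.filter (fun d => S.head d = v), (f₂ d - f₂ (S.rev d)) := by
            rw [← Finset.sum_sub_distrib]
            refine Finset.sum_congr rfl fun d _ => ?_
            simp only [hadef]
            ring
          rw [h3, h1, h2, sub_self]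
        -- potential for `a` on the cotree
        obtain ⟨α, hα⟩ := EFL_tree_potential_aux S.rev S.rev_invol S.rev_ne S.right S.left
          (fun e => (EFL_right_rev S e).symm) (univ : Finset S.F).card univ H.C a le_rfl
          ⟨r, Finset.mem_univ r⟩ H.cotree.1 (fun e _ => Finset.mem_univ _)
          (fun p _ q _ => H.cotree.2.1 p q)
          (by rw [Finset.card_univ]; exact H.cotree.2.2) hanti_a
        set β := fun d => α (S.right d) - α (S.left d) - a d with hβdef
        have hβanti : ∀ d, β (S.rev d) = - β d := by
          intro d
          simp only [hβdef, EFL_right_rev, EFL_left_rev, hanti_a]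
          ring
        have hβC : ∀ d ∈ H.C, β d = 0 := by
          intro d hd
          simp only [hβdef]
          rw [← hα d hd]
          ring
        have hT1 : ∀ i : Fin (2 * S.g), ∑ d, α (S.right d) * (H.cyc i d : ℝ) = 0 := by
          intro i
          rw [← Finset.sum_fiberwise_of_maps_to (g := S.right)
            (fun d _ => Finset.mem_univ (S.right d)) (fun d => α (S.right d) * (H.cyc i d : ℝ))]
          refine Finset.sum_eq_zero fun q _ => ?_
          have h1 : ∑ d ∈ univ.filter (fun d => S.right d = q), α (S.right d) * (H.cyc i d : ℝ)
              = ∑ d ∈ univ.filter (fun d => S.right d = q), α q * (H.cyc i d : ℝ) :=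
            Finset.sum_congr rfl fun d hd => by rw [(Finset.mem_filter.1 hd).2]
          rw [h1, ← Finset.mul_sum]
          have h2 : ∑ d ∈ univ.filter (fun d => S.right d = q), (H.cyc i d : ℝ) = 0 := by
            rw [← Int.cast_sum, H.cyc_circ i q, Int.cast_zero]
          rw [h2, mul_zero]
        have hT2 : ∀ i : Fin (2 * S.g), ∑ d, α (S.left d) * (H.cyc i d : ℝ) = 0 := by
          intro i
          have hrei : ∑ d, α (S.left d) * (H.cyc i d : ℝ)
              = ∑ d, α (S.right d) * (-(H.cyc i d : ℝ)) := by
            rw [← EFL_sum_rev S (fun d => α (S.right d) * (-(H.cyc i d : ℝ)))]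
            refine Finset.sum_congr rfl fun d _ => ?_
            rw [EFL_right_rev, H.cyc_antisym]
            push_cast
            ring
          have hneg : ∑ d, α (S.right d) * (-(H.cyc i d : ℝ))
              = - ∑ d, α (S.right d) * (H.cyc i d : ℝ) := by
            rw [← Finset.sum_neg_distrib]
            exact Finset.sum_congr rfl fun d _ => by ring
          rw [hrei, hneg, hT1 i, neg_zero]
        have hpair : ∀ i : Fin (2 * S.g), ∑ d, β d * (H.cyc i d : ℝ) = 0 := by
          intro i
          have expand : ∑ d, β d * (H.cyc i d : ℝ)
              = (∑ d, α (S.right d) * (H.cyc i d : ℝ))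
                - (∑ d, α (S.left d) * (H.cyc i d : ℝ))
                - ∑ d, a d * (H.cyc i d : ℝ) := by
            rw [← Finset.sum_sub_distrib, ← Finset.sum_sub_distrib]
            refine Finset.sum_congr rfl fun d _ => ?_
            simp only [hβdef]
            ring
          rw [expand, hT1 i, hT2 i, hsiga i]
          ring
        have hβell : ∀ i : Fin (2 * S.g), β (H.ell i) = 0 := by
          intro i
          have hpairne : H.ell i ≠ S.rev (H.ell i) := (S.rev_ne (H.ell i)).symm
          have hsub : ∑ d ∈ ({H.ell i, S.rev (H.ell i)} : Finset S.D), β d * (H.cyc i d : ℝ)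
              = ∑ d, β d * (H.cyc i d : ℝ) := by
            apply Finset.sum_subset (Finset.subset_univ _)
            intro x _ hx
            by_cases hcyc : H.cyc i x = 0
            · rw [hcyc, Int.cast_zero, mul_zero]
            · rcases H.cyc_supp i x hcyc with hC | hx1 | hx2
              · rw [hβC x hC, zero_mul]
              · exact absurd (by simp [hx1]) hx
              · exact absurd (by simp [hx2]) hx
          rw [hpair i, Finset.sum_pair hpairne] at hsub
          rw [H.cyc_ell i, hβanti, H.cyc_antisym, H.cyc_ell i] at hsub
          push_cast at hsub
          linarith
        have hβL : ∀ d ∈ H.L, β d = 0 := by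
          intro d hd
          rcases H.ell_cover d hd with ⟨i, h | h⟩
          · rw [h]; exact hβell i
          · rw [h, hβanti, hβell i, neg_zero]
        have hβsupp : ∀ d, d ∉ H.T → β d = 0 := by
          intro d hd
          have hmem : d ∈ H.T ∪ H.L ∪ H.C := by rw [H.cover]; exact Finset.mem_univ d
          rcases Finset.mem_union.1 hmem with h | h
          · rcases Finset.mem_union.1 h with h' | h'
            · exact absurd h' hd
            · exact hβL d h'
          · exact hβC d h
        have hβsum : ∀ v, ∑ d ∈ H.T.filter (fun d => S.head d = v), β d = 0 := by
          intro v
          have hfull : ∑ d ∈ univ.filter (fun d => S.head d = v), β d = 0 := by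
            have h1 : ∑ d ∈ univ.filter (fun d => S.head d = v),
                (α (S.right d) - α (S.left d)) = 0 := by
              rw [Finset.sum_sub_distrib, EFL_telescope S α v, sub_self]
            have h3 : ∑ d ∈ univ.filter (fun d => S.head d = v), β d
                = (∑ d ∈ univ.filter (fun d => S.head d = v), (α (S.right d) - α (S.left d)))
                  - ∑ d ∈ univ.filter (fun d => S.head d = v), a d := by
              rw [← Finset.sum_sub_distrib]
            rw [h3, h1, hcircA v, sub_self]
          rw [← hfull]
          apply Finset.sum_subset
          · exact Finset.filter_subset_filter _ (Finset.subset_univ _)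
          · intro x hx hnx
            apply hβsupp
            intro hxT
            exact hnx (Finset.mem_filter.2 ⟨hxT, (Finset.mem_filter.1 hx).2⟩)
        have hβT : ∀ d ∈ H.T, β d = 0 :=
          EFL_tree_support_aux S.rev S.rev_invol S.rev_ne S.head S.tail (fun e => rfl)
            (univ : Finset S.V).card univ H.T β le_rfl
            ⟨S.head d₀, Finset.mem_univ _⟩ H.tree.1 (fun e _ => Finset.mem_univ _)
            (fun p _ q _ => H.tree.2.1 p q)
            (by rw [Finset.card_univ]; exact H.tree.2.2) hβanti hβsum
        have haα : ∀ d, a d = α (S.right d) - α (S.left d) := by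
          intro d
          have h0 : β d = 0 := by
            by_cases hd : d ∈ H.T
            · exact hβT d hd
            · exact hβsupp d hd
          simp only [hβdef] at h0
          linarith
        -- monotonicity along the reachability relations
        have hle : ∀ q, Relation.ReflTransGen relLe r q → α q ≤ α r := by
          intro q h
          induction h with
          | refl => exact le_refl _
          | tail hstep hrel ih =>
            obtain ⟨d, hld, hrd, had⟩ := hrel
            have h2 := haα d
            rw [hld, hrd] at h2
            linarith
        have hge : ∀ q, Relation.ReflTransGen relGe r q → α r ≤ α q := by
          intro q h
          induction h with
          | refl => exact le_refl _
          | tail hstep hrel ih =>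
            obtain ⟨d, hld, hrd, had⟩ := hrel
            have h2 := haα d
            rw [hld, hrd] at h2
            linarith
        have hconst : ∀ q, α q = α r := fun q =>
          le_antisymm (hle q (hR q)) (hge q (hR2 q))
        apply hd₀
        rw [haα d₀, hconst (S.right d₀), hconst (S.left d₀), sub_self]
      · -- some face unreachable by `relGe`: push with roles swapped
        push_neg at hR2
        obtain ⟨q₀, hq₀⟩ := hR2
        set F'' := univ.filter (fun q => ¬ Relation.ReflTransGen relGe r q) with hF''
        have hq₀m : q₀ ∈ F'' := Finset.mem_filter.2 ⟨Finset.mem_univ _, hq₀⟩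
        have hsum : (∑ q ∈ F'', S.dualImbalance z q) ≠ 0 := by
          have hlt : ∑ q ∈ F'', S.dualImbalance z q < 0 := by
            apply Finset.sum_neg
            · intro q hq
              refine hz.2 q ?_
              intro h
              rw [h] at hq
              exact (Finset.mem_filter.1 hq).2 Relation.ReflTransGen.refl
            · exact ⟨q₀, hq₀m⟩
          linarith
        have hres : ∀ d, S.left d ∉ F'' → S.right d ∈ F'' →
            (f₁ d < f₂ d ∨ f₂ (S.rev d) < f₁ (S.rev d)) := by
          intro d hl hr
          have hreach : Relation.ReflTransGen relGe r (S.left d) := by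
            by_contra hc
            exact hl (Finset.mem_filter.2 ⟨Finset.mem_univ _, hc⟩)
          have hnr : ¬ Relation.ReflTransGen relGe r (S.right d) := (Finset.mem_filter.1 hr).2
          have hlt0 : a d < 0 := by
            by_contra hge'
            push_neg at hge'
            exact hnr (hreach.tail ⟨d, rfl, rfl, hge'⟩)
          by_contra hc
          push_neg at hc
          simp only [hadef] at hlt0
          obtain ⟨hc1, hc2⟩ := hc
          linarith
        obtain ⟨f, hf, hor⟩ := EFL_pushSet S H z hz.1 c μ b f₂ f₁ h₂ h₁ F'' hsum hres
        exact ⟨f, hf, hor.symm⟩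
    · -- some face unreachable by `relLe`: push directly
      push_neg at hR
      obtain ⟨q₀, hq₀⟩ := hR
      set F'' := univ.filter (fun q => ¬ Relation.ReflTransGen relLe r q) with hF''
      have hq₀m : q₀ ∈ F'' := Finset.mem_filter.2 ⟨Finset.mem_univ _, hq₀⟩
      have hsum : (∑ q ∈ F'', S.dualImbalance z q) ≠ 0 := by
        have hlt : ∑ q ∈ F'', S.dualImbalance z q < 0 := by
          apply Finset.sum_neg
          · intro q hq
            refine hz.2 q ?_
            intro h
            rw [h] at hq
            exact (Finset.mem_filter.1 hq).2 Relation.ReflTransGen.refl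
          · exact ⟨q₀, hq₀m⟩
        linarith
      have hres : ∀ d, S.left d ∉ F'' → S.right d ∈ F'' →
          (f₂ d < f₁ d ∨ f₁ (S.rev d) < f₂ (S.rev d)) := by
        intro d hl hr
        have hreach : Relation.ReflTransGen relLe r (S.left d) := by
          by_contra hc
          exact hl (Finset.mem_filter.2 ⟨Finset.mem_univ _, hc⟩)
        have hnr : ¬ Relation.ReflTransGen relLe r (S.right d) := (Finset.mem_filter.1 hr).2
        have hgt0 : 0 < a d := by
          by_contra hle'
          push_neg at hle'
          exact hnr (hreach.tail ⟨d, rfl, rfl, hle'⟩)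
        by_contra hc
        push_neg at hc
        simp only [hadef] at hgt0
        obtain ⟨hc1, hc2⟩ := hc
        linarith
      exact EFL_pushSet S H z hz.1 c μ b f₁ f₂ h₁ h₂ F'' hsum hres
end
end

section
/- Let c : darts → ℝ be a dart cost function, let c' be its lexicographic perturbation, and let μ and b be dart capacity and vertex demand functions. If a minimum-cost feasible flow with respect to c', μ, and b exists, then it is unique, and it is also a minimum-cost feasible flow with respect to the unperturbed costs c. -/
/-!
Common combinatorial framework for graphs cellularly embedded on orientable surfaces,
following Erickson, Fox, and Lkhamsuren, "Holiest Minimum-Cost Paths and Flows in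
Surface Graphs".

A graph `G = (V, E, F)` embedded on an orientable surface is given combinatorially by a
finite set of darts together with a fixed-point-free involution `rev` (whose orbits are
the edges) and a permutation `next` (= π, whose orbits are the vertices); the faces are
the orbits of `rev ∘ next`, and the genus `g` is determined by Euler's formula
`|V| - |E| + |F| = 2 - 2g`.
-/

noncomputable section

open Finset

open scoped Classical

set_option maxHeartbeats 1000000

section AuxHoly

open Finset

/-! ### Lexicographic order facts -/

lemma lexLt_asymm' {n : ℕ} {a b : Fin n → ℝ} (h1 : lexLt a b) (h2 : lexLt b a) : False := by
  obtain ⟨i, hi, hlt⟩ := h1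
  obtain ⟨j, hj, hlt'⟩ := h2
  rcases lt_trichotomy i j with hij | hij | hij
  · exact absurd (hj i hij).symm (ne_of_lt hlt)
  · subst hij; exact lt_asymm hlt hlt'
  · exact absurd (hi j hij).symm (ne_of_lt hlt')

lemma lexLe_antisymm' {n : ℕ} {a b : Fin n → ℝ} (h1 : lexLe a b) (h2 : lexLe b a) : a = b := by
  rcases h1 with h1 | h1
  · rcases h2 with h2 | h2
    · exact (lexLt_asymm' h1 h2).elim
    · exact h2.symm
  · exact h1

lemma lexLe_zero_comp {n : ℕ} {a b : Fin (n + 1) → ℝ} (h : lexLe a b) : a 0 ≤ b 0 := by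
  rcases h with ⟨i, hi, hlt⟩ | rfl
  · rcases eq_or_ne i 0 with rfl | h0
    · exact le_of_lt hlt
    · exact le_of_eq (hi 0 (Fin.pos_of_ne_zero h0))
  · exact le_rfl

lemma lex_cancel {n : ℕ} {u x : Fin n → ℝ} (h1 : lexLe u (fun j => u j + x j))
    (h2 : lexLe u (fun j => u j - x j)) : x = 0 := by
  rcases h1 with ⟨i, hi, hlt⟩ | he
  · rcases h2 with ⟨i', hi', hlt'⟩ | he'
    · exfalso
      have hxi : (0:ℝ) < x i := by simpa using hlt
      have hxi' : x i' < 0 := by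
        have : u i' < u i' - x i' := hlt'
        linarith
      rcases lt_trichotomy i i' with hii | rfl | hii
      · have h := hi' i hii
        have : x i = 0 := by simp only at h; linarith
        linarith
      · linarith
      · have h := hi i' hii
        have : x i' = 0 := by simp only at h; linarith
        linarith
    · funext j
      have := congrFun he' j
      simp only [Pi.zero_apply]
      linarith
  · funext j
    have := congrFun he j
    simp only [Pi.zero_apply]
    linarith

/-! ### Generic tree lemmas -/

section TreeLemmas

variable {D X : Type} [Fintype D] [DecidableEq D] [Fintype X] [DecidableEq X]
variable {rv : D → D} {hd tl : D → X}

lemma conn_step_erase (A : Finset D) (v₀ : X) (d₀ : D)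
    (hrvrv : ∀ d, rv (rv d) = d) (hAr : ∀ d ∈ A, rv d ∈ A) (htlrev : ∀ d, tl d = hd (rv d))
    (hd₀A : d₀ ∈ A) (hhd₀ : hd d₀ = v₀) (hu : ∀ d ∈ A, hd d = v₀ → d = d₀)
    (hne : tl d₀ ≠ v₀) {p q : X}
    (hpq : Relation.ReflTransGen (fun a b => ∃ d ∈ A, tl d = a ∧ hd d = b) p q) :
    Relation.ReflTransGen
      (fun a b => ∃ d ∈ (A.erase d₀).erase (rv d₀), tl d = a ∧ hd d = b)
      (if p = v₀ then tl d₀ else p) (if q = v₀ then tl d₀ else q) := by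
  induction hpq with
  | refl => exact .refl
  | @tail b c hab hbc ih =>
    obtain ⟨d, hdA, hta, hhb⟩ := hbc
    by_cases h1 : d = d₀
    · -- b = tl d₀, c = v₀
      have hb : b = tl d₀ := by rw [← hta, h1]
      have hc : c = v₀ := by rw [← hhb, h1, hhd₀]
      have : (if c = v₀ then tl d₀ else c) = (if b = v₀ then tl d₀ else b) := by
        rw [if_pos hc, hb, if_neg hne]
      rw [this]; exact ih
    by_cases h2 : d = rv d₀
    · have hb : b = v₀ := by
        rw [← hta, h2, htlrev, hrvrv, hhd₀]
      have hc : c = tl d₀ := by rw [← hhb, h2, ← htlrev]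
      have : (if c = v₀ then tl d₀ else c) = (if b = v₀ then tl d₀ else b) := by
        rw [if_neg (by rw [hc]; exact hne), if_pos hb, hc]
      rw [this]; exact ih
    · have hbv : b ≠ v₀ := by
        intro hb
        apply h2
        have : hd (rv d) = v₀ := by rw [← htlrev, hta, hb]
        have := hu (rv d) (hAr d hdA) this
        rw [← this, hrvrv]
      have hcv : c ≠ v₀ := fun hc => h1 (hu d hdA (hhb.trans hc))
      have hstep : ∃ d' ∈ (A.erase d₀).erase (rv d₀), tl d' = b ∧ hd d' = c :=
        ⟨d, Finset.mem_erase.mpr ⟨h2, Finset.mem_erase.mpr ⟨h1, hdA⟩⟩, hta, hhb⟩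
      rw [if_neg hbv] at ih
      rw [if_neg hcv]
      exact ih.tail hstep

lemma exists_leaf (A : Finset D) (W : Finset X)
    (hAr : ∀ d ∈ A, rv d ∈ A) (hW : ∀ d ∈ A, hd d ∈ W)
    (htlrev : ∀ d, tl d = hd (rv d))
    (hconn : ∀ p q, p ∈ W → q ∈ W →
      Relation.ReflTransGen (fun a b => ∃ d ∈ A, tl d = a ∧ hd d = b) p q)
    (hcard : A.card + 2 ≤ 2 * W.card) (hA : A.Nonempty) :
    ∃ v₀ ∈ W, ∃ d₀, A.filter (fun d => hd d = v₀) = {d₀} := by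
  have hW2 : 2 ≤ W.card := by
    have : 1 ≤ A.card := Finset.card_pos.mpr hA
    omega
  have hdeg1 : ∀ v ∈ W, 1 ≤ (A.filter (fun d => hd d = v)).card := by
    intro v hv
    obtain ⟨x, hx, y, hy, hxy⟩ := Finset.one_lt_card.mp hW2
    have hw' : ∃ w', w' ∈ W ∧ w' ≠ v := by
      rcases eq_or_ne x v with rfl | hxv
      · exact ⟨y, hy, fun h => hxy h.symm⟩
      · exact ⟨x, hx, hxv⟩
    obtain ⟨w', hw'W, hw'v⟩ := hw'
    rcases (hconn v w' hv hw'W).cases_head with heq | ⟨c, ⟨d, hdA, htld, _⟩, _⟩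
    · exact absurd heq.symm hw'v
    · apply Finset.card_pos.mpr
      exact ⟨rv d, Finset.mem_filter.mpr ⟨hAr d hdA, by rw [← htlrev, htld]⟩⟩
  have hsum : ∑ v ∈ W, (A.filter (fun d => hd d = v)).card = A.card :=
    (Finset.card_eq_sum_card_fiberwise hW).symm
  have hleaf : ∃ v₀ ∈ W, (A.filter (fun d => hd d = v₀)).card ≤ 1 := by
    by_contra hcon
    push_neg at hcon
    have h2s := Finset.card_nsmul_le_sum W _ 2 (fun v hv => hcon v hv)
    simp only [smul_eq_mul] at h2s
    omega
  obtain ⟨v₀, hv₀, hle⟩ := hleaf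
  have : (A.filter (fun d => hd d = v₀)).card = 1 := le_antisymm hle (hdeg1 v₀ hv₀)
  obtain ⟨d₀, hd₀⟩ := Finset.card_eq_one.mp this
  exact ⟨v₀, hv₀, d₀, hd₀⟩

lemma tree_potential (hrvrv : ∀ d, rv (rv d) = d) (hrvne : ∀ d, rv d ≠ d)
    (htlrev : ∀ d, tl d = hd (rv d)) (w : D → ℝ) (hw : ∀ d, w (rv d) = - w d) :
    ∀ (n : ℕ) (W : Finset X) (A : Finset D), W.card ≤ n →
      (∀ d ∈ A, rv d ∈ A) → (∀ d ∈ A, hd d ∈ W) →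
      (∀ p q, p ∈ W → q ∈ W →
        Relation.ReflTransGen (fun a b => ∃ d ∈ A, tl d = a ∧ hd d = b) p q) →
      A.card + 2 ≤ 2 * W.card →
      ∃ α : X → ℝ, ∀ d ∈ A, α (hd d) - α (tl d) = w d := by
  intro n
  induction n with
  | zero =>
    intro W A hWn _ _ _ hcard
    exact absurd hcard (by omega)
  | succ n ih =>
    intro W A hWn hAr hWm hconn hcard
    rcases A.eq_empty_or_nonempty with rfl | hA
    · exact ⟨0, by simp⟩
    obtain ⟨v₀, hv₀W, d₀, hfib⟩ := exists_leaf A W hAr hWm htlrev hconn hcard hA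
    have hd₀mem : d₀ ∈ A.filter (fun d => hd d = v₀) := hfib ▸ Finset.mem_singleton_self d₀
    have hd₀A : d₀ ∈ A := (Finset.mem_filter.mp hd₀mem).1
    have hhd₀ : hd d₀ = v₀ := (Finset.mem_filter.mp hd₀mem).2
    have hu : ∀ d ∈ A, hd d = v₀ → d = d₀ := fun d hdA hhd =>
      Finset.mem_singleton.mp (hfib ▸ Finset.mem_filter.mpr ⟨hdA, hhd⟩)
    have hrd₀A : rv d₀ ∈ A := hAr d₀ hd₀A
    have hne : tl d₀ ≠ v₀ := by
      intro hcon
      apply hrvne d₀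
      exact hu (rv d₀) hrd₀A (by rw [← htlrev]; exact hcon)
    have hrd₀ne : rv d₀ ≠ d₀ := hrvne d₀
    set A' := (A.erase d₀).erase (rv d₀) with hA'
    set W' := W.erase v₀ with hW'
    have hmemA' : ∀ d, d ∈ A' ↔ d ≠ rv d₀ ∧ d ≠ d₀ ∧ d ∈ A := by
      intro d
      simp [hA', Finset.mem_erase, and_assoc]
    have hrd₀eA : rv d₀ ∈ A.erase d₀ := Finset.mem_erase.mpr ⟨hrd₀ne, hrd₀A⟩
    have hcard2 : 2 ≤ A.card := by
      have : ({d₀, rv d₀} : Finset D) ⊆ A := by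
        intro x hx
        rcases Finset.mem_insert.mp hx with rfl | hx
        · exact hd₀A
        · rw [Finset.mem_singleton.mp hx]; exact hrd₀A
      calc 2 = ({d₀, rv d₀} : Finset D).card := (Finset.card_pair (Ne.symm hrd₀ne)).symm
        _ ≤ A.card := Finset.card_le_card this
    have hA'card : A'.card + 2 = A.card := by
      rw [hA', Finset.card_erase_of_mem hrd₀eA, Finset.card_erase_of_mem hd₀A]
      omega
    have hW'card : W'.card + 1 = W.card := by
      rw [hW', Finset.card_erase_of_mem hv₀W]
      omega
    -- conditions for IH
    have hAr' : ∀ d ∈ A', rv d ∈ A' := by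
      intro d hd'
      rw [hmemA'] at hd' ⊢
      obtain ⟨h2, h1, hdA⟩ := hd'
      refine ⟨?_, ?_, hAr d hdA⟩
      · intro hc; apply h1; rw [← hrvrv d, hc, hrvrv]
      · intro hc; apply h2; rw [← hrvrv d, hc]
    have hWm' : ∀ d ∈ A', hd d ∈ W' := by
      intro d hd'
      rw [hmemA'] at hd'
      obtain ⟨h2, h1, hdA⟩ := hd'
      rw [hW', Finset.mem_erase]
      exact ⟨fun hc => h1 (hu d hdA hc), hWm d hdA⟩
    have hconn' : ∀ p q, p ∈ W' → q ∈ W' →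
        Relation.ReflTransGen (fun a b => ∃ d ∈ A', tl d = a ∧ hd d = b) p q := by
      intro p q hp hq
      have hpW := Finset.mem_erase.mp hp
      have hqW := Finset.mem_erase.mp hq
      have := conn_step_erase A v₀ d₀ hrvrv hAr htlrev hd₀A hhd₀ hu hne
        (hconn p q hpW.2 hqW.2)
      rw [if_neg hpW.1, if_neg hqW.1] at this
      exact this
    obtain ⟨α', hα'⟩ := ih W' A' (by omega) hAr' hWm' hconn' (by omega)
    refine ⟨Function.update α' v₀ (α' (tl d₀) + w d₀), ?_⟩
    intro d hdA
    rcases eq_or_ne d d₀ with rfl | h1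
    · rw [hhd₀, Function.update_self, Function.update_of_ne hne]
      ring
    rcases eq_or_ne d (rv d₀) with rfl | h2
    · have h3 : hd (rv d₀) = tl d₀ := (htlrev d₀).symm
      have h4 : tl (rv d₀) = v₀ := by rw [htlrev, hrvrv, hhd₀]
      rw [h3, h4, Function.update_of_ne hne, Function.update_self, hw]
      ring
    · have hdA' : d ∈ A' := (hmemA' d).mpr ⟨h2, h1, hdA⟩
      have hh : hd d ≠ v₀ := fun hc => h1 (hu d hdA hc)
      have ht : tl d ≠ v₀ := by
        rw [htlrev]
        intro hc
        apply h2
        have := hu (rv d) (hAr d hdA) hc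
        rw [← this, hrvrv]
      rw [Function.update_of_ne hh, Function.update_of_ne ht]
      exact hα' d hdA'

lemma tree_rigid (hrvrv : ∀ d, rv (rv d) = d) (hrvne : ∀ d, rv d ≠ d)
    (htlrev : ∀ d, tl d = hd (rv d)) :
    ∀ (n : ℕ) (W : Finset X) (A : Finset D) (δ : D → ℝ), (∀ d, δ (rv d) = - δ d) →
      (∀ v : X, ∑ d ∈ univ.filter (fun d => hd d = v), δ d = 0) →
      W.card ≤ n →
      (∀ d ∈ A, rv d ∈ A) → (∀ d ∈ A, hd d ∈ W) →
      (∀ p q, p ∈ W → q ∈ W →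
        Relation.ReflTransGen (fun a b => ∃ d ∈ A, tl d = a ∧ hd d = b) p q) →
      A.card + 2 ≤ 2 * W.card →
      (∀ d, δ d ≠ 0 → d ∈ A) → ∀ d, δ d = 0 := by
  intro n
  induction n with
  | zero =>
    intro W A δ hδ hbal hWn _ _ _ hcard _
    exact absurd hcard (by omega)
  | succ n ih =>
    intro W A δ hδ hbal hWn hAr hWm hconn hcard hsupp
    rcases A.eq_empty_or_nonempty with rfl | hA
    · intro d
      by_contra hc
      exact absurd (hsupp d hc) (Finset.notMem_empty d)
    obtain ⟨v₀, hv₀W, d₀, hfib⟩ := exists_leaf A W hAr hWm htlrev hconn hcard hA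
    have hd₀mem : d₀ ∈ A.filter (fun d => hd d = v₀) := hfib ▸ Finset.mem_singleton_self d₀
    have hd₀A : d₀ ∈ A := (Finset.mem_filter.mp hd₀mem).1
    have hhd₀ : hd d₀ = v₀ := (Finset.mem_filter.mp hd₀mem).2
    have hu : ∀ d ∈ A, hd d = v₀ → d = d₀ := fun d hdA hhd =>
      Finset.mem_singleton.mp (hfib ▸ Finset.mem_filter.mpr ⟨hdA, hhd⟩)
    have hrd₀A : rv d₀ ∈ A := hAr d₀ hd₀A
    have hne : tl d₀ ≠ v₀ := by
      intro hcon
      apply hrvne d₀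
      exact hu (rv d₀) hrd₀A (by rw [← htlrev]; exact hcon)
    have hrd₀ne : rv d₀ ≠ d₀ := hrvne d₀
    -- δ d₀ = 0
    have hδd₀ : δ d₀ = 0 := by
      have h0 := hbal v₀
      have : ∑ d ∈ univ.filter (fun d => hd d = v₀), δ d = δ d₀ := by
        apply Finset.sum_eq_single_of_mem d₀
          (Finset.mem_filter.mpr ⟨Finset.mem_univ _, hhd₀⟩)
        intro b hb hbne
        by_contra hbc
        exact hbne (hu b (hsupp b hbc) (Finset.mem_filter.mp hb).2)
      rw [this] at h0
      exact h0
    have hδrd₀ : δ (rv d₀) = 0 := by rw [hδ, hδd₀, neg_zero]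
    set A' := (A.erase d₀).erase (rv d₀) with hA'
    set W' := W.erase v₀ with hW'
    have hmemA' : ∀ d, d ∈ A' ↔ d ≠ rv d₀ ∧ d ≠ d₀ ∧ d ∈ A := by
      intro d
      simp [hA', Finset.mem_erase, and_assoc]
    have hrd₀eA : rv d₀ ∈ A.erase d₀ := Finset.mem_erase.mpr ⟨hrd₀ne, hrd₀A⟩
    have hcard2 : 2 ≤ A.card := by
      have : ({d₀, rv d₀} : Finset D) ⊆ A := by
        intro x hx
        rcases Finset.mem_insert.mp hx with rfl | hx
        · exact hd₀A
        · rw [Finset.mem_singleton.mp hx]; exact hrd₀A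
      calc 2 = ({d₀, rv d₀} : Finset D).card := (Finset.card_pair (Ne.symm hrd₀ne)).symm
        _ ≤ A.card := Finset.card_le_card this
    have hA'card : A'.card + 2 = A.card := by
      rw [hA', Finset.card_erase_of_mem hrd₀eA, Finset.card_erase_of_mem hd₀A]
      omega
    have hW'card : W'.card + 1 = W.card := by
      rw [hW', Finset.card_erase_of_mem hv₀W]
      omega
    have hAr' : ∀ d ∈ A', rv d ∈ A' := by
      intro d hd'
      rw [hmemA'] at hd' ⊢
      obtain ⟨h2, h1, hdA⟩ := hd'
      refine ⟨?_, ?_, hAr d hdA⟩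
      · intro hc; apply h1; rw [← hrvrv d, hc, hrvrv]
      · intro hc; apply h2; rw [← hrvrv d, hc]
    have hWm' : ∀ d ∈ A', hd d ∈ W' := by
      intro d hd'
      rw [hmemA'] at hd'
      obtain ⟨h2, h1, hdA⟩ := hd'
      rw [hW', Finset.mem_erase]
      exact ⟨fun hc => h1 (hu d hdA hc), hWm d hdA⟩
    have hconn' : ∀ p q, p ∈ W' → q ∈ W' →
        Relation.ReflTransGen (fun a b => ∃ d ∈ A', tl d = a ∧ hd d = b) p q := by
      intro p q hp hq
      have hpW := Finset.mem_erase.mp hp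
      have hqW := Finset.mem_erase.mp hq
      have := conn_step_erase A v₀ d₀ hrvrv hAr htlrev hd₀A hhd₀ hu hne
        (hconn p q hpW.2 hqW.2)
      rw [if_neg hpW.1, if_neg hqW.1] at this
      exact this
    have hsupp' : ∀ d, δ d ≠ 0 → d ∈ A' := by
      intro d hdne
      rw [hmemA']
      refine ⟨?_, ?_, hsupp d hdne⟩
      · intro hc; rw [hc] at hdne; exact hdne hδrd₀
      · intro hc; rw [hc] at hdne; exact hdne hδd₀
    exact ih W' A' δ hδ hbal (by omega) hAr' hWm' hconn' (by omega) hsupp'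

end TreeLemmas

end AuxHoly

section AuxHoly2

open Finset

namespace CombSurface

variable (S : CombSurface)

lemma right_rev (d : S.D) : S.right (S.rev d) = S.left d := by
  unfold CombSurface.right
  rw [S.rev_invol]

lemma left_rev (d : S.D) : S.left (S.rev d) = S.right d := rfl

lemma tail_def (d : S.D) : S.tail d = S.head (S.rev d) := rfl

lemma tail_rev (d : S.D) : S.tail (S.rev d) = S.head d := by
  rw [tail_def, S.rev_invol]

lemma right_next (d : S.D) : S.right (S.next d) = S.left d := S.left_step d

lemma head_iterate (k : ℕ) (d : S.D) : S.head (S.next^[k] d) = S.head d := by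
  induction k with
  | zero => rfl
  | succ k ihk => rw [Function.iterate_succ_apply', S.head_next, ihk]

lemma sum_rev (q : S.D → ℝ) : ∑ d, q (S.rev d) = ∑ d, q d :=
  Finset.sum_bijective S.rev (Function.Involutive.bijective S.rev_invol)
    (by simp) (fun d _ => rfl)

lemma sum_tail_to_head (q : S.D → ℝ) (v : S.V) :
    ∑ d ∈ univ.filter (fun d => S.tail d = v), q d
      = ∑ d ∈ univ.filter (fun d => S.head d = v), q (S.rev d) := by
  apply Finset.sum_nbij' (i := S.rev) (j := S.rev)
  · intro a ha
    simp only [mem_filter, mem_univ, true_and] at ha ⊢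
    rw [← tail_def]; exact ha
  · intro a ha
    simp only [mem_filter, mem_univ, true_and] at ha ⊢
    rw [tail_rev]; exact ha
  · intro a _; exact S.rev_invol a
  · intro a _; exact S.rev_invol a
  · intro a _; rw [S.rev_invol]

lemma imbalance_head (q : S.D → ℝ) (v : S.V) :
    S.imbalance q v = ∑ d ∈ univ.filter (fun d => S.head d = v), (q d - q (S.rev d)) := by
  unfold CombSurface.imbalance
  rw [sum_sub_distrib, sum_tail_to_head]

lemma imbalance_head_zero (δ : S.D → ℝ) (hδ : ∀ d, δ (S.rev d) = - δ d) (v : S.V)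
    (h0 : S.imbalance δ v = 0) :
    ∑ d ∈ univ.filter (fun d => S.head d = v), δ d = 0 := by
  have h1 := S.imbalance_head δ v
  have h2 : ∑ d ∈ univ.filter (fun d => S.head d = v), (δ d - δ (S.rev d))
      = 2 * ∑ d ∈ univ.filter (fun d => S.head d = v), δ d := by
    rw [mul_sum]
    apply Finset.sum_congr rfl
    intro d _
    rw [hδ]; ring
  rw [h0] at h1
  rw [h2] at h1
  linarith

lemma imbalance_sub (x y : S.D → ℝ) (v : S.V) :
    S.imbalance (fun d => x d - y d) v = S.imbalance x v - S.imbalance y v := by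
  unfold CombSurface.imbalance
  rw [sum_sub_distrib, sum_sub_distrib]
  ring

lemma imbalance_mix (x y u : S.D → ℝ) (s : ℝ) (v : S.V) :
    S.imbalance (fun d => (x d + y d)/2 + s * u d) v
      = (S.imbalance x v + S.imbalance y v)/2 + s * S.imbalance u v := by
  have key : ∀ s' : Finset S.D, ∑ d ∈ s', ((x d + y d)/2 + s * u d)
      = ((∑ d ∈ s', x d) + ∑ d ∈ s', y d)/2 + s * ∑ d ∈ s', u d := by
    intro s'
    rw [Finset.sum_add_distrib, ← Finset.sum_div, Finset.sum_add_distrib, ← Finset.mul_sum]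
  unfold CombSurface.imbalance
  rw [key, key]
  ring

lemma imbalance_comp_rev (q : S.D → ℝ) (v : S.V) :
    S.imbalance (fun d => q (S.rev d)) v = - S.imbalance q v := by
  unfold CombSurface.imbalance
  have h1 : ∑ d ∈ univ.filter (fun d => S.tail d = v), q (S.rev d)
      = ∑ d ∈ univ.filter (fun d => S.head d = v), q d := by
    rw [sum_tail_to_head]
    apply Finset.sum_congr rfl
    intro d _
    rw [S.rev_invol]
  rw [h1, ← sum_tail_to_head]
  ring

lemma sum_head_rotation (α : S.F → ℝ) (v : S.V) :
    ∑ d ∈ univ.filter (fun d => S.head d = v), (α (S.right d) - α (S.left d)) = 0 := by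
  rw [sum_sub_distrib]
  have h1 : ∑ d ∈ univ.filter (fun d => S.head d = v), α (S.left d)
      = ∑ d ∈ univ.filter (fun d => S.head d = v), α (S.right d) := by
    apply Finset.sum_nbij' (i := S.next)
      (j := fun d => (Equiv.ofBijective S.next S.next_bij).symm d)
    · intro a ha
      simp only [mem_filter, mem_univ, true_and] at ha ⊢
      rw [S.head_next]; exact ha
    · intro a ha
      simp only [mem_filter, mem_univ, true_and] at ha ⊢
      have h2 : S.next ((Equiv.ofBijective S.next S.next_bij).symm a) = a :=
        Equiv.ofBijective_apply_symm_apply _ _ a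
      rw [← S.head_next ((Equiv.ofBijective S.next S.next_bij).symm a), h2]
      exact ha
    · intro a _
      exact Equiv.ofBijective_symm_apply_apply _ _ a
    · intro a _
      exact Equiv.ofBijective_apply_symm_apply _ _ a
    · intro a _
      rw [S.right_next]
  rw [h1]
  ring

lemma imbalance_boundary (α : S.F → ℝ) (v : S.V) :
    S.imbalance (fun d => α (S.right d) - α (S.left d)) v = 0 := by
  rw [imbalance_head]
  have h1 : ∀ d : S.D, ((α (S.right d) - α (S.left d))
      - (α (S.right (S.rev d)) - α (S.left (S.rev d))))
      = 2 * (α (S.right d) - α (S.left d)) := by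
    intro d
    rw [S.right_rev, S.left_rev]
    ring
  rw [Finset.sum_congr rfl (fun d _ => h1 d), ← mul_sum, sum_head_rotation, mul_zero]

/-- the fan lemma: walking around a vertex. -/
lemma fan (α : S.F → ℝ) (ww : S.D → ℝ) (hα : ∀ d, ww d = α (S.right d) - α (S.left d))
    (x y : S.D) (hxy : S.tail y = S.head x) (hne : x ≠ S.rev y)
    (hsupp : ∀ d, S.head d = S.head x → ww d ≠ 0 → d = x ∨ d = S.rev y) :
    α (S.left x) = α (S.left y) := by
  have hhy : S.head x = S.head (S.rev y) := by rw [← tail_def]; exact hxy.symm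
  have hex : ∃ nn, S.next^[nn] x = S.rev y := S.head_orbit x (S.rev y) hhy
  have hn0 : Nat.find hex ≠ 0 := by
    intro h
    have := Nat.find_spec hex
    rw [h] at this
    exact hne this
  have key : ∀ j, j ≤ Nat.find hex → 1 ≤ j → α (S.right (S.next^[j] x)) = α (S.left x) := by
    intro j
    induction j with
    | zero => intro _ h; omega
    | succ j ihj =>
      intro hle _
      rcases Nat.eq_zero_or_pos j with rfl | hj1
      · rw [Function.iterate_one, S.right_next]
      · have hP := ihj (by omega) hj1
        have hwd : ww (S.next^[j] x) = 0 := by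
          by_contra hww
          rcases hsupp _ (S.head_iterate j x) hww with hcx | hcy
          · have : S.next^[Nat.find hex - j] (S.next^[j] x) = S.rev y := by
              rw [← Function.iterate_add_apply]
              have : Nat.find hex - j + j = Nat.find hex := by omega
              rw [this]
              exact Nat.find_spec hex
            rw [hcx] at this
            exact Nat.find_min hex (by omega) this
          · exact Nat.find_min hex (by omega) hcy
        have h2 : α (S.left (S.next^[j] x)) = α (S.right (S.next^[j] x)) := by
          have := hα (S.next^[j] x)
          rw [hwd] at this
          linarith
        rw [Function.iterate_succ_apply', S.right_next, h2, hP]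
  have hfin := key (Nat.find hex) le_rfl (by omega)
  rw [Nat.find_spec hex, S.right_rev] at hfin
  exact hfin.symm

end CombSurface

/-! ### Arc structure of a circulation -/

noncomputable def aH (S : CombSurface) (h : S.D → ℝ) (d : S.D) : S.V :=
  if 0 < h d then S.head d else S.tail d

noncomputable def aT (S : CombSurface) (h : S.D → ℝ) (d : S.D) : S.V :=
  if 0 < h d then S.tail d else S.head d

lemma arc_step (S : CombSurface) (h : S.D → ℝ) (himb : ∀ v, S.imbalance h v = 0)
    (d : S.D) (hd : h d ≠ 0) : ∃ e, h e ≠ 0 ∧ aT S h e = aH S h d := by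
  by_contra hcon
  push_neg at hcon
  set v := aH S h d with hv
  have hout : ∀ e, S.tail e = v → h e ≤ 0 := by
    intro e hte
    by_contra hc
    push_neg at hc
    exact (hcon e (ne_of_gt hc)) (by rw [aT, if_pos hc]; exact hte)
  have hin : ∀ e, S.head e = v → 0 ≤ h e := by
    intro e hte
    by_contra hc
    push_neg at hc
    exact (hcon e (ne_of_lt hc)) (by rw [aT, if_neg (by linarith)]; exact hte)
  have h0 := himb v
  unfold CombSurface.imbalance at h0
  have hA : 0 ≤ ∑ e ∈ univ.filter (fun e => S.head e = v), h e :=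
    Finset.sum_nonneg (fun e he => hin e (Finset.mem_filter.mp he).2)
  have hB : ∑ e ∈ univ.filter (fun e => S.tail e = v), h e ≤ 0 :=
    Finset.sum_nonpos (fun e he => hout e (Finset.mem_filter.mp he).2)
  have hA0 : ∑ e ∈ univ.filter (fun e => S.head e = v), h e = 0 := by linarith
  have hB0 : ∑ e ∈ univ.filter (fun e => S.tail e = v), h e = 0 := by linarith
  rcases lt_or_gt_of_ne hd with hneg | hpos
  · -- h d < 0 : aH d = tail d = v, so h d appears in the tail sum
    have hmem : d ∈ univ.filter (fun e => S.tail e = v) := by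
      refine Finset.mem_filter.mpr ⟨Finset.mem_univ _, ?_⟩
      rw [hv, aH, if_neg (by linarith)]
    have := (Finset.sum_eq_zero_iff_of_nonpos
      (fun e he => hout e (Finset.mem_filter.mp he).2)).mp hB0 d hmem
    linarith
  · have hmem : d ∈ univ.filter (fun e => S.head e = v) := by
      refine Finset.mem_filter.mpr ⟨Finset.mem_univ _, ?_⟩
      rw [hv, aH, if_pos hpos]
    have := (Finset.sum_eq_zero_iff_of_nonneg
      (fun e he => hin e (Finset.mem_filter.mp he).2)).mp hA0 d hmem
    linarith

lemma cycle_exists (S : CombSurface) (h : S.D → ℝ) (himb : ∀ v, S.imbalance h v = 0)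
    (d₀ : S.D) (hd₀ : h d₀ ≠ 0) :
    ∃ (seq : ℕ → S.D) (m N : ℕ), m < N ∧ (∀ n, h (seq n) ≠ 0) ∧
      (∀ n, aT S h (seq (n + 1)) = aH S h (seq n)) ∧
      (aH S h (seq m) = aH S h (seq N)) ∧
      (∀ a b, m < a → a ≤ N → m < b → b ≤ N →
        aH S h (seq a) = aH S h (seq b) → a = b) := by
  let T := {d : S.D // h d ≠ 0}
  let nxt : T → T := fun a =>
    ⟨(arc_step S h himb a.1 a.2).choose, (arc_step S h himb a.1 a.2).choose_spec.1⟩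
  let sq : ℕ → T := fun n => nxt^[n] ⟨d₀, hd₀⟩
  have hchain : ∀ n, aT S h (sq (n + 1)).1 = aH S h (sq n).1 := by
    intro n
    have : sq (n + 1) = nxt (sq n) := Function.iterate_succ_apply' nxt n _
    rw [this]
    exact (arc_step S h himb (sq n).1 (sq n).2).choose_spec.2
  let vs : ℕ → S.V := fun n => aH S h (sq n).1
  have hpig : ∃ n, ∃ m', m' < n ∧ vs m' = vs n := by
    obtain ⟨x, y, hxy, hveq⟩ := Finite.exists_ne_map_eq_of_infinite vs
    rcases lt_or_gt_of_ne hxy with hlt | hlt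
    · exact ⟨y, x, hlt, hveq⟩
    · exact ⟨x, y, hlt, hveq.symm⟩
  let N := Nat.find hpig
  obtain ⟨m, hmN, hvm⟩ := Nat.find_spec hpig
  refine ⟨fun n => (sq n).1, m, N, hmN, fun n => (sq n).2, hchain, hvm, ?_⟩
  intro a b ha1 ha2 hb1 hb2 heq
  by_contra hab
  -- wlog a < b
  have main : ∀ a b, m < a → a ≤ N → m < b → b ≤ N → a < b → vs a = vs b → False := by
    intro a b ha1 ha2 hb1 hb2 hlt heq
    rcases eq_or_lt_of_le hb2 with rfl | hbN
    · -- b = N : then vs a = vs N = vs m, so (m, a) is an earlier witness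
      have : vs m = vs a := hvm.trans heq.symm
      exact Nat.find_min hpig (show a < N from hlt) ⟨m, ha1, this⟩
    · exact Nat.find_min hpig hbN ⟨a, hlt, heq⟩
  rcases lt_or_gt_of_ne hab with hlt | hlt
  · exact main a b ha1 ha2 hb1 hb2 hlt heq
  · exact main b a hb1 hb2 ha1 ha2 hlt heq.symm

/-! ### The drainage contradiction -/

lemma drainage_contra (S : CombSurface) (z : S.D → ℝ) (r : S.F) (hz : S.IsDrainage z r)
    (α : S.F → ℝ) (a : ℝ) (E : Finset S.D) (hEne : E.Nonempty)
    (hall : ∀ p, α p = a ∨ α p = a + 1)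
    (hmem : ∀ d, d ∈ E ↔ (α (S.right d) = a + 1 ∧ α (S.left d) = a))
    (hsumE : ∑ d ∈ E, z d = 0) : False := by
  classical
  set A : Finset S.F := univ.filter (fun p => α p = a + 1) with hA
  have hmemA : ∀ p, p ∈ A ↔ α p = a + 1 := by
    intro p; simp [hA]
  have hnotA : ∀ p, p ∉ A ↔ α p = a := by
    intro p
    rw [hmemA]
    rcases hall p with hp | hp <;> constructor <;> intro hx
    · exact hp
    · rw [hp]; intro hc; linarith
    · exact absurd hp hx
    · linarith
  -- sum over A of dual imbalance
  have hSA : ∑ p ∈ A, S.dualImbalance z p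
      = ∑ d ∈ univ.filter (fun d => S.right d ∈ A), z d := by
    unfold CombSurface.dualImbalance
    exact Finset.sum_fiberwise_eq_sum_filter univ A S.right z
  have hsplit : ∑ d ∈ univ.filter (fun d => S.right d ∈ A), z d
      = (∑ d ∈ (univ.filter (fun d => S.right d ∈ A)).filter (fun d => S.left d ∈ A), z d)
      + ∑ d ∈ (univ.filter (fun d => S.right d ∈ A)).filter (fun d => S.left d ∉ A), z d :=
    (Finset.sum_filter_add_sum_filter_not _ _ _).symm
  have hint : ∑ d ∈ (univ.filter (fun d => S.right d ∈ A)).filter (fun d => S.left d ∈ A), z d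
      = 0 := by
    apply Finset.sum_involution (fun d _ => S.rev d)
    · intro d _
      rw [hz.1]; ring
    · intro d _ hd
      exact fun hc => S.rev_ne d hc
    · intro d hd
      simp only [Finset.mem_filter, Finset.mem_univ, true_and] at hd ⊢
      rw [S.right_rev, S.left_rev]
      exact ⟨hd.2, hd.1⟩
    · intro d _
      exact S.rev_invol d
  have hbdry : (univ.filter (fun d => S.right d ∈ A)).filter (fun d => S.left d ∉ A) = E := by
    ext d
    simp only [Finset.mem_filter, Finset.mem_univ, true_and]
    rw [hmemA, hnotA, hmem]
  have hSA0 : ∑ p ∈ A, S.dualImbalance z p = 0 := by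
    rw [hSA, hsplit, hint, hbdry, hsumE]; ring
  -- total sum is zero
  have htot : ∑ p, S.dualImbalance z p = 0 := by
    have h1 : ∑ p ∈ (univ : Finset S.F), S.dualImbalance z p
        = ∑ d ∈ univ.filter (fun d => S.right d ∈ (univ : Finset S.F)), z d := by
      unfold CombSurface.dualImbalance
      exact Finset.sum_fiberwise_eq_sum_filter univ univ S.right z
    have h2 : univ.filter (fun d => S.right d ∈ (univ : Finset S.F)) = univ := by
      simp
    rw [h1, h2]
    apply Finset.sum_involution (fun d _ => S.rev d)
    · intro d _
      rw [hz.1]; ring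
    · intro d _ hd
      exact fun hc => S.rev_ne d hc
    · intro d _; exact Finset.mem_univ _
    · intro d _; exact S.rev_invol d
  obtain ⟨d₁, hd₁⟩ := hEne
  have hd₁r : S.right d₁ ∈ A := (hmemA _).mpr ((hmem d₁).mp hd₁).1
  have hd₁l : S.left d₁ ∉ A := (hnotA _).mpr ((hmem d₁).mp hd₁).2
  by_cases hr : r ∈ A
  · -- complement is nonempty, all terms negative
    have hcompl : ∑ p ∈ univ.filter (fun p => ¬ p ∈ A), S.dualImbalance z p = 0 := by
      have := Finset.sum_filter_add_sum_filter_not (univ : Finset S.F)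
        (fun p => p ∈ A) (S.dualImbalance z)
      have hAA : univ.filter (fun p => p ∈ A) = A := by
        ext p; simp
      rw [hAA, hSA0, htot] at this
      linarith
    have hcne : (univ.filter (fun p => ¬ p ∈ A)).Nonempty :=
      ⟨S.left d₁, Finset.mem_filter.mpr ⟨Finset.mem_univ _, hd₁l⟩⟩
    have hneg : ∑ p ∈ univ.filter (fun p => ¬ p ∈ A), S.dualImbalance z p
        < ∑ p ∈ univ.filter (fun p => ¬ p ∈ A), (0:ℝ) := by
      apply Finset.sum_lt_sum_of_nonempty hcne
      intro p hp
      apply hz.2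
      intro hc
      rw [hc] at hp
      exact (Finset.mem_filter.mp hp).2 hr
    simp only [Finset.sum_const_zero] at hneg
    linarith
  · have hAne : A.Nonempty := ⟨S.right d₁, hd₁r⟩
    have hneg : ∑ p ∈ A, S.dualImbalance z p < ∑ p ∈ A, (0:ℝ) := by
      apply Finset.sum_lt_sum_of_nonempty hAne
      intro p hp
      apply hz.2
      intro hc
      rw [hc] at hp
      exact hr hp
    simp only [Finset.sum_const_zero] at hneg
    linarith

end AuxHoly2


section AuxHoly3

open Finset

lemma no_nonzero (S : CombSurface) (H : HomologyBasis S) (z : S.D → ℝ) (r : S.F)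
    (hdr : S.IsDrainage z r) (h : S.D → ℝ) (himb : ∀ v, S.imbalance h v = 0)
    (hvan : ∀ w : S.D → ℝ, (∀ d, w d ≠ 0 → h d ≠ 0) → (∀ d, |w d| ≤ 1) →
      (∀ v, S.imbalance w v = 0) →
      (∑ d, w d) = 0 ∧ (∀ i, (∑ d, w d * (H.cyc i d : ℝ)) = 0) ∧ (∑ d, w d * z d) = 0)
    (hne : h ≠ 0) : False := by
  classical
  obtain ⟨d₀, hd₀⟩ : ∃ d, h d ≠ 0 := by
    by_contra hc; push_neg at hc; exact hne (funext hc)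
  obtain ⟨sq, m, N, hmN, hsq, hchain, hwrap, hinj⟩ := cycle_exists S h himb d₀ hd₀
  set I : Finset ℕ := Finset.Ioc m N with hI
  have hmI : m + 1 ∈ I := by rw [hI, Finset.mem_Ioc]; omega
  let σ : ℕ → ℝ := fun n => if 0 < h (sq n) then 1 else -1
  have hσdef : ∀ n, σ n = if 0 < h (sq n) then 1 else -1 := fun n => rfl
  let w : S.D → ℝ := fun d => ∑ n ∈ I, if sq n = d then σ n else 0
  have hwdef : ∀ d, w d = ∑ n ∈ I, if sq n = d then σ n else 0 := fun d => rfl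
  have hseq_inj : ∀ a ∈ I, ∀ b ∈ I, sq a = sq b → a = b := by
    intro a ha b hb heq
    rw [hI, Finset.mem_Ioc] at ha hb
    exact hinj a b ha.1 ha.2 hb.1 hb.2 (by rw [heq])
  have hwval : ∀ n ∈ I, w (sq n) = σ n := by
    intro n hn
    rw [hwdef]
    have := Finset.sum_eq_single_of_mem (f := fun j => if sq j = sq n then σ j else 0) n hn
      (fun j hj hjne => if_neg (fun hc => hjne (hseq_inj j hj n hn hc)))
    simpa using this
  have hw0 : ∀ d, (∀ n ∈ I, sq n ≠ d) → w d = 0 := by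
    intro d hd
    rw [hwdef]
    exact Finset.sum_eq_zero (fun n hn => if_neg (hd n hn))
  have hwF : ∀ F : S.D → ℝ, ∑ d, w d * F d = ∑ n ∈ I, σ n * F (sq n) := by
    intro F
    calc ∑ d, w d * F d = ∑ d, ∑ n ∈ I, (if sq n = d then σ n * F d else 0) := by
          apply Finset.sum_congr rfl
          intro d _
          rw [hwdef, Finset.sum_mul]
          apply Finset.sum_congr rfl
          intro n _
          split_ifs <;> simp
      _ = ∑ n ∈ I, ∑ d, (if sq n = d then σ n * F d else 0) := Finset.sum_comm
      _ = ∑ n ∈ I, σ n * F (sq n) := by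
          apply Finset.sum_congr rfl
          intro n _
          rw [Finset.sum_ite_eq]
          simp
  have hwfilter : ∀ s : Finset S.D, ∑ d ∈ s, w d = ∑ n ∈ I, (if sq n ∈ s then σ n else 0) := by
    intro s
    calc ∑ d ∈ s, w d = ∑ n ∈ I, ∑ d ∈ s, (if sq n = d then σ n else 0) := Finset.sum_comm
      _ = _ := by
        apply Finset.sum_congr rfl
        intro n _
        rw [Finset.sum_ite_eq]
  have hwcirc : ∀ v, S.imbalance w v = 0 := by
    intro v
    unfold CombSurface.imbalance
    rw [hwfilter, hwfilter, ← Finset.sum_sub_distrib]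
    have hterm : ∀ n ∈ I,
        ((if sq n ∈ univ.filter (fun d => S.head d = v) then σ n else 0)
          - (if sq n ∈ univ.filter (fun d => S.tail d = v) then σ n else 0))
        = ((if aH S h (sq n) = v then (1:ℝ) else 0)
          - (if aT S h (sq n) = v then (1:ℝ) else 0)) := by
      intro n _
      simp only [Finset.mem_filter, Finset.mem_univ, true_and]
      by_cases h0 : 0 < h (sq n)
      · rw [hσdef, if_pos h0]
        unfold aH aT
        rw [if_pos h0, if_pos h0]
      · rw [hσdef, if_neg h0]
        unfold aH aT
        rw [if_neg h0, if_neg h0]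
        split_ifs <;> ring
    rw [Finset.sum_congr rfl hterm]
    have hstep : ∀ n ∈ I, (if aT S h (sq n) = v then (1:ℝ) else 0)
        = (if aH S h (sq (n - 1)) = v then (1:ℝ) else 0) := by
      intro n hn
      rw [hI, Finset.mem_Ioc] at hn
      have h2 := hchain (n - 1)
      rw [show n - 1 + 1 = n by omega] at h2
      rw [h2]
    rw [Finset.sum_congr rfl (fun n hn => by rw [hstep n hn])]
    have hIco : I = Finset.Ico (m + 1) (N + 1) := by
      rw [hI]; ext x; rw [Finset.mem_Ioc, Finset.mem_Ico]; omega
    rw [hIco, Finset.sum_Ico_eq_sum_range]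
    have hlen : N + 1 - (m + 1) = N - m := by omega
    rw [hlen]
    have hre : ∀ j, ((if aH S h (sq (m + 1 + j)) = v then (1:ℝ) else 0)
        - (if aH S h (sq (m + 1 + j - 1)) = v then (1:ℝ) else 0))
        = ((if aH S h (sq (m + (j + 1))) = v then (1:ℝ) else 0)
          - (if aH S h (sq (m + j)) = v then (1:ℝ) else 0)) := by
      intro j
      rw [show m + 1 + j = m + (j + 1) by omega, show m + (j + 1) - 1 = m + j by omega]
    have htel := Finset.sum_range_sub
      (fun i => if aH S h (sq (m + i)) = v then (1:ℝ) else 0) (N - m)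
    rw [Finset.sum_congr rfl (fun j _ => hre j), htel]
    rw [show m + (N - m) = N by omega, show m + 0 = m by omega, hwrap]
    ring
  have hsupp : ∀ d, w d ≠ 0 → h d ≠ 0 := by
    intro d hwd hc
    apply hwd
    apply hw0
    intro n hn heq
    exact hsq n (by rw [heq, hc])
  have habs : ∀ d, |w d| ≤ 1 := by
    intro d
    by_cases hex : ∃ n ∈ I, sq n = d
    · obtain ⟨n, hn, rfl⟩ := hex
      rw [hwval n hn, hσdef]
      split_ifs <;> simp
    · push_neg at hex
      rw [hw0 d hex]
      simp
  obtain ⟨hS1, hScyc, hSz⟩ := hvan w hsupp habs hwcirc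
  have hσ0 : ∑ n ∈ I, σ n = 0 := by
    have h1 : ∑ d, w d = ∑ n ∈ I, σ n := by
      have := hwF (fun _ => 1)
      simpa using this
    rw [← h1]; exact hS1
  have hk2 : N = m + 2 → σ (m+1) + σ (m+2) = 0 := by
    intro hN2
    have hpr : I = {m+1, m+2} := by
      rw [hI, hN2]; ext x; rw [Finset.mem_Ioc, Finset.mem_insert, Finset.mem_singleton]; omega
    rw [hpr, Finset.sum_pair (by omega : m + 1 ≠ m + 2)] at hσ0
    exact hσ0
  -- no dart of the cycle is the reversal of another
  have hrd : ∀ a ∈ I, ∀ b ∈ I, sq a ≠ S.rev (sq b) := by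
    intro a ha b hb hcon
    have haI := Finset.mem_Ioc.mp (hI ▸ ha)
    have hbI := Finset.mem_Ioc.mp (hI ▸ hb)
    have hab : a ≠ b := by
      intro hq
      rw [hq] at hcon
      exact S.rev_ne (sq b) hcon.symm
    have h2 : S.head (sq a) = S.tail (sq b) := by
      rw [hcon]; exact (S.tail_def (sq b)).symm
    have h3 : S.tail (sq a) = S.head (sq b) := by rw [hcon, S.tail_rev]
    have hca : aT S h (sq a) = aH S h (sq (a-1)) := by
      have := hchain (a-1); rw [show a - 1 + 1 = a by omega] at this; exact this
    have hcb : aT S h (sq b) = aH S h (sq (b-1)) := by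
      have := hchain (b-1); rw [show b - 1 + 1 = b by omega] at this; exact this
    by_cases hsa : 0 < h (sq a) <;> by_cases hsb : 0 < h (sq b)
    · -- both positive
      have e1 : aH S h (sq a) = aH S h (sq (b-1)) := by
        rw [← hcb]
        unfold aH aT
        rw [if_pos hsa, if_pos hsb]
        exact h2
      have e2 : aH S h (sq (a-1)) = aH S h (sq b) := by
        rw [← hca]
        unfold aH aT
        rw [if_pos hsa, if_pos hsb]
        exact h3
      have c1 : b - 1 = a ∨ (b = m + 1 ∧ a = N) := by
        by_cases hbm : b = m + 1
        · right
          refine ⟨hbm, ?_⟩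
          have e1' : aH S h (sq a) = aH S h (sq m) := by
            rw [hbm] at e1
            simpa using e1
          exact hinj a N haI.1 haI.2 hmN le_rfl (e1'.trans hwrap)
        · left
          exact hinj (b-1) a (by omega) (by omega) haI.1 haI.2 e1.symm
      have c2 : a - 1 = b ∨ (a = m + 1 ∧ b = N) := by
        by_cases ham : a = m + 1
        · right
          refine ⟨ham, ?_⟩
          have e2' : aH S h (sq m) = aH S h (sq b) := by
            rw [ham] at e2
            simpa using e2
          exact (hinj N b hmN le_rfl hbI.1 hbI.2 (hwrap.symm.trans e2')).symm
        · left
          exact hinj (a-1) b (by omega) (by omega) hbI.1 hbI.2 e2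
      -- resolve cases
      have hNm2 : N = m + 2 ∧ ((a = m+1 ∧ b = m+2) ∨ (a = m+2 ∧ b = m+1)) := by
        rcases c1 with hc1 | ⟨hc1, hc1'⟩ <;> rcases c2 with hc2 | ⟨hc2, hc2'⟩ <;> omega
      have := hk2 hNm2.1
      rcases hNm2.2 with ⟨rfl, rfl⟩ | ⟨rfl, rfl⟩ <;>
        · rw [hσdef, hσdef, if_pos hsa, if_pos hsb] at this
          norm_num at this
    · -- a positive, b negative
      have e3 : aH S h (sq (a-1)) = aH S h (sq (b-1)) := by
        rw [← hca, ← hcb]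
        unfold aT
        rw [if_pos hsa, if_neg hsb]
        exact h3
      by_cases ham : a = m + 1 <;> by_cases hbm : b = m + 1
      · omega
      · -- a = m+1: aH (sq m) = aH (sq (b-1)), use wrap
        have e3' : aH S h (sq m) = aH S h (sq (b-1)) := by
          rw [ham] at e3
          simpa using e3
        have := hinj N (b-1) hmN le_rfl (by omega) (by omega) (hwrap.symm.trans e3')
        omega
      · have e3' : aH S h (sq (a-1)) = aH S h (sq m) := by
          rw [hbm] at e3
          simpa using e3
        have := hinj (a-1) N (by omega) (by omega) hmN le_rfl (e3'.trans hwrap)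
        omega
      · have := hinj (a-1) (b-1) (by omega) (by omega) (by omega) (by omega) e3
        omega
    · -- a negative, b positive
      have e4 : aH S h (sq a) = aH S h (sq b) := by
        unfold aH
        rw [if_neg hsa, if_pos hsb]
        exact h3
      exact hab (hinj a b haI.1 haI.2 hbI.1 hbI.2 e4)
    · -- both negative
      have e1 : aH S h (sq a) = aH S h (sq (b-1)) := by
        rw [← hcb]
        unfold aH aT
        rw [if_neg hsa, if_neg hsb]
        exact h3
      have e2 : aH S h (sq (a-1)) = aH S h (sq b) := by
        rw [← hca]
        unfold aH aT
        rw [if_neg hsa, if_neg hsb]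
        exact h2
      have c1 : b - 1 = a ∨ (b = m + 1 ∧ a = N) := by
        by_cases hbm : b = m + 1
        · right
          refine ⟨hbm, ?_⟩
          have e1' : aH S h (sq a) = aH S h (sq m) := by
            rw [hbm] at e1
            simpa using e1
          exact hinj a N haI.1 haI.2 hmN le_rfl (e1'.trans hwrap)
        · left
          exact hinj (b-1) a (by omega) (by omega) haI.1 haI.2 e1.symm
      have c2 : a - 1 = b ∨ (a = m + 1 ∧ b = N) := by
        by_cases ham : a = m + 1
        · right
          refine ⟨ham, ?_⟩
          have e2' : aH S h (sq m) = aH S h (sq b) := by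
            rw [ham] at e2
            simpa using e2
          exact (hinj N b hmN le_rfl hbI.1 hbI.2 (hwrap.symm.trans e2')).symm
        · left
          exact hinj (a-1) b (by omega) (by omega) hbI.1 hbI.2 e2
      have hNm2 : N = m + 2 ∧ ((a = m+1 ∧ b = m+2) ∨ (a = m+2 ∧ b = m+1)) := by
        rcases c1 with hc1 | ⟨hc1, hc1'⟩ <;> rcases c2 with hc2 | ⟨hc2, hc2'⟩ <;> omega
      have := hk2 hNm2.1
      rcases hNm2.2 with ⟨rfl, rfl⟩ | ⟨rfl, rfl⟩ <;>
        · rw [hσdef, hσdef, if_neg hsa, if_neg hsb] at this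
          norm_num at this
  -- the directed simple cycle darts
  let e : ℕ → S.D := fun n => if 0 < h (sq n) then sq n else S.rev (sq n)
  have hedef : ∀ n, e n = if 0 < h (sq n) then sq n else S.rev (sq n) := fun n => rfl
  have hehead : ∀ n, S.head (e n) = aH S h (sq n) := by
    intro n
    rw [hedef]
    unfold aH
    split_ifs with h0
    · rfl
    · exact (S.tail_def (sq n)).symm
  have hetail : ∀ n, S.tail (e n) = aT S h (sq n) := by
    intro n
    rw [hedef]
    unfold aT
    split_ifs with h0
    · rfl
    · exact S.tail_rev (sq n)
  have he_inj : ∀ a ∈ I, ∀ b ∈ I, e a = e b → a = b := by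
    intro a ha b hb heq
    have haI := Finset.mem_Ioc.mp (hI ▸ ha)
    have hbI := Finset.mem_Ioc.mp (hI ▸ hb)
    have : aH S h (sq a) = aH S h (sq b) := by rw [← hehead, ← hehead, heq]
    exact hinj a b haI.1 haI.2 hbI.1 hbI.2 this
  have he_nrev : ∀ a ∈ I, ∀ b ∈ I, e a ≠ S.rev (e b) := by
    intro a ha b hb hcon
    rw [hedef, hedef] at hcon
    by_cases h0a : 0 < h (sq a) <;> by_cases h0b : 0 < h (sq b)
    · rw [if_pos h0a, if_pos h0b] at hcon
      exact hrd a ha b hb hcon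
    · rw [if_pos h0a, if_neg h0b, S.rev_invol] at hcon
      exact h0b (hseq_inj a ha b hb hcon ▸ h0a)
    · rw [if_neg h0a, if_pos h0b] at hcon
      have : sq a = sq b := by
        rw [← S.rev_invol (sq a), hcon, S.rev_invol]
      exact h0a (hseq_inj a ha b hb this ▸ h0b)
    · rw [if_neg h0a, if_neg h0b, S.rev_invol] at hcon
      exact hrd b hb a ha hcon.symm
  -- the antisymmetrized cycle flow
  let wh : S.D → ℝ := fun d => w d - w (S.rev d)
  have hwhdef : ∀ d, wh d = w d - w (S.rev d) := fun _ => rfl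
  have hwh_rev : ∀ d, wh (S.rev d) = - wh d := by
    intro d
    rw [hwhdef, hwhdef, S.rev_invol]
    ring
  have hwrevz : ∀ n ∈ I, w (S.rev (sq n)) = 0 := by
    intro n hn
    apply hw0
    intro j hj hc
    exact hrd j hj n hn hc
  have hwh_e : ∀ n ∈ I, wh (e n) = 1 := by
    intro n hn
    rw [hedef]
    split_ifs with h0
    · rw [hwhdef, hwval n hn, hwrevz n hn, hσdef, if_pos h0]
      ring
    · rw [hwhdef, S.rev_invol, hwval n hn, hwrevz n hn, hσdef, if_neg h0]
      ring
  have hwh_zero : ∀ d, (∀ n ∈ I, e n ≠ d) → (∀ n ∈ I, S.rev (e n) ≠ d) → wh d = 0 := by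
    intro d h1 h2
    have ha : w d = 0 := by
      apply hw0
      intro n hn hc
      by_cases h0 : 0 < h (sq n)
      · exact h1 n hn (by rw [hedef, if_pos h0]; exact hc)
      · exact h2 n hn (by rw [hedef, if_neg h0, S.rev_invol]; exact hc)
    have hb : w (S.rev d) = 0 := by
      apply hw0
      intro n hn hc
      have hd2 : d = S.rev (sq n) := by rw [hc, S.rev_invol]
      by_cases h0 : 0 < h (sq n)
      · exact h2 n hn (by rw [hedef, if_pos h0]; exact hd2.symm)
      · exact h1 n hn (by rw [hedef, if_neg h0]; exact hd2.symm)
    rw [hwhdef, ha, hb]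
    ring
  have hwh_char : ∀ d, wh d ≠ 0 → (∃ n ∈ I, e n = d) ∨ (∃ n ∈ I, S.rev (e n) = d) := by
    intro d hd
    by_contra hc
    push_neg at hc
    exact hd (hwh_zero d hc.1 hc.2)
  have hwh_circ : ∀ v, S.imbalance wh v = 0 := by
    intro v
    have h1 : S.imbalance wh v
        = S.imbalance w v - S.imbalance (fun d => w (S.rev d)) v := S.imbalance_sub _ _ v
    rw [h1, S.imbalance_comp_rev, hwcirc]
    ring
  have hwh_pair : ∀ q : S.D → ℝ, (∀ d, q (S.rev d) = - q d) →
      ∑ d, wh d * q d = 2 * ∑ d, w d * q d := by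
    intro q hq
    have h0 : ∑ d, wh d * q d = ∑ d, w d * q d - ∑ d, w (S.rev d) * q d := by
      rw [← Finset.sum_sub_distrib]
      apply Finset.sum_congr rfl
      intro d _
      rw [hwhdef]
      ring
    have h1 : ∑ d, w (S.rev d) * q d = ∑ d, w d * q (S.rev d) := by
      have h2 := S.sum_rev (fun d => w d * q (S.rev d))
      calc ∑ d, w (S.rev d) * q d = ∑ d, w (S.rev d) * q (S.rev (S.rev d)) := by
            apply Finset.sum_congr rfl
            intro d _
            rw [S.rev_invol]
        _ = _ := h2
    have h3 : ∑ d, w d * q (S.rev d) = - ∑ d, w d * q d := by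
      calc ∑ d, w d * q (S.rev d) = ∑ d, -(w d * q d) := by
            apply Finset.sum_congr rfl
            intro d _
            rw [hq]
            ring
        _ = - ∑ d, w d * q d := Finset.sum_neg_distrib _
    rw [h0, h1, h3]
    ring
  have hwh_cyc : ∀ i, ∑ d, wh d * (H.cyc i d : ℝ) = 0 := by
    intro i
    rw [hwh_pair (fun d => (H.cyc i d : ℝ))
      (fun d => by
        show ((H.cyc i (S.rev d) : ℤ) : ℝ) = -((H.cyc i d : ℤ) : ℝ)
        rw [H.cyc_antisym]; push_cast; ring), hScyc i]
    ring
  have hwh_z : ∑ d, wh d * z d = 0 := by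
    rw [hwh_pair z hdr.1, hSz]
    ring
  -- the face potential from the cotree
  have hFcard : 1 ≤ Fintype.card S.F := @Fintype.card_pos _ _ ⟨S.left d₀⟩
  have hVcard : 1 ≤ Fintype.card S.V := @Fintype.card_pos _ _ ⟨S.head d₀⟩
  obtain ⟨α₀, hα₀⟩ := tree_potential (rv := S.rev) (hd := S.right) (tl := S.left)
    S.rev_invol S.rev_ne (fun d => (S.right_rev d).symm) wh hwh_rev
    (Fintype.card S.F) univ H.C (by rw [Finset.card_univ])
    H.cotree.1 (fun d _ => Finset.mem_univ _)
    (fun p q _ _ => H.cotree.2.1 p q)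
    (by rw [Finset.card_univ, H.cotree.2.2]; omega)
  -- the residual circulation vanishes (tree rigidity)
  let δ : S.D → ℝ := fun d => wh d - (α₀ (S.right d) - α₀ (S.left d))
  have hδdef : ∀ d, δ d = wh d - (α₀ (S.right d) - α₀ (S.left d)) := fun _ => rfl
  have hδrev : ∀ d, δ (S.rev d) = - δ d := by
    intro d
    rw [hδdef, hδdef, hwh_rev, S.right_rev, S.left_rev]
    ring
  have hδbal : ∀ v, ∑ d ∈ univ.filter (fun d => S.head d = v), δ d = 0 := by
    intro v
    have h1 : ∑ d ∈ univ.filter (fun d => S.head d = v), wh d = 0 :=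
      S.imbalance_head_zero wh hwh_rev v (hwh_circ v)
    have h2 := S.sum_head_rotation α₀ v
    calc ∑ d ∈ univ.filter (fun d => S.head d = v), δ d
        = (∑ d ∈ univ.filter (fun d => S.head d = v), wh d)
          - ∑ d ∈ univ.filter (fun d => S.head d = v), (α₀ (S.right d) - α₀ (S.left d)) := by
          rw [← Finset.sum_sub_distrib]
      _ = 0 := by rw [h1, h2]; ring
  have hδC : ∀ d ∈ H.C, δ d = 0 := by
    intro d hd
    rw [hδdef, ← hα₀ d hd]
    ring
  have hbpair : ∀ i, ∑ d, (α₀ (S.right d) - α₀ (S.left d)) * (H.cyc i d : ℝ) = 0 := by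
    intro i
    have h1 : ∑ d, α₀ (S.left d) * (H.cyc i d : ℝ)
        = - ∑ d, α₀ (S.right d) * (H.cyc i d : ℝ) := by
      have h2 := S.sum_rev (fun d => -(α₀ (S.right d) * (H.cyc i d : ℝ)))
      calc ∑ d, α₀ (S.left d) * (H.cyc i d : ℝ)
          = ∑ d, -(α₀ (S.right (S.rev d)) * (H.cyc i (S.rev d) : ℝ)) := by
            apply Finset.sum_congr rfl
            intro d _
            rw [S.right_rev, H.cyc_antisym]
            push_cast
            ring
        _ = ∑ d, -(α₀ (S.right d) * (H.cyc i d : ℝ)) := h2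
        _ = - ∑ d, α₀ (S.right d) * (H.cyc i d : ℝ) := Finset.sum_neg_distrib _
    have h3 : ∑ d, α₀ (S.right d) * (H.cyc i d : ℝ) = 0 := by
      have h4 := Finset.sum_fiberwise_eq_sum_filter univ univ S.right
        (fun d => α₀ (S.right d) * (H.cyc i d : ℝ))
      have h5 : univ.filter (fun d : S.D => S.right d ∈ (univ : Finset S.F)) = univ := by
        simp
      rw [h5] at h4
      rw [← h4]
      apply Finset.sum_eq_zero
      intro p _
      have h6 : ∑ d ∈ univ.filter (fun d => S.right d = p), α₀ (S.right d) * (H.cyc i d : ℝ)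
          = α₀ p * ∑ d ∈ univ.filter (fun d => S.right d = p), (H.cyc i d : ℝ) := by
        rw [Finset.mul_sum]
        apply Finset.sum_congr rfl
        intro d hd
        rw [(Finset.mem_filter.mp hd).2]
      rw [h6]
      have h7 : ∑ d ∈ univ.filter (fun d => S.right d = p), (H.cyc i d : ℝ) = 0 := by
        rw [← Int.cast_sum, H.cyc_circ i p, Int.cast_zero]
      rw [h7, mul_zero]
    calc ∑ d, (α₀ (S.right d) - α₀ (S.left d)) * (H.cyc i d : ℝ)
        = (∑ d, α₀ (S.right d) * (H.cyc i d : ℝ))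
          - ∑ d, α₀ (S.left d) * (H.cyc i d : ℝ) := by
          rw [← Finset.sum_sub_distrib]
          apply Finset.sum_congr rfl
          intro d _
          ring
      _ = 0 := by rw [h1, h3]; ring
  have hδell : ∀ i, δ (H.ell i) = 0 := by
    intro i
    have hp : ∑ d, δ d * (H.cyc i d : ℝ) = 2 * δ (H.ell i) := by
      have hsub : ∑ d, δ d * (H.cyc i d : ℝ)
          = ∑ d ∈ ({H.ell i, S.rev (H.ell i)} : Finset S.D), δ d * (H.cyc i d : ℝ) := by
        symm
        apply Finset.sum_subset (Finset.subset_univ _)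
        intro d _ hdni
        by_cases hc : H.cyc i d = 0
        · rw [hc]
          simp
        · rcases H.cyc_supp i d hc with hdC | hdE | hdE
          · rw [hδC d hdC]
            ring
          · exact absurd (by rw [hdE]; exact Finset.mem_insert_self _ _) hdni
          · exact absurd (by rw [hdE]; simp) hdni
      rw [hsub, Finset.sum_pair (Ne.symm (S.rev_ne (H.ell i))), hδrev (H.ell i),
        H.cyc_antisym i (H.ell i), H.cyc_ell i]
      push_cast
      ring
    have hq : ∑ d, δ d * (H.cyc i d : ℝ) = 0 := by
      have hd7 : ∀ d, δ d * (H.cyc i d : ℝ) = wh d * (H.cyc i d : ℝ)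
          - (α₀ (S.right d) - α₀ (S.left d)) * (H.cyc i d : ℝ) := by
        intro d
        rw [hδdef]
        ring
      rw [Finset.sum_congr rfl (fun d _ => hd7 d), Finset.sum_sub_distrib, hwh_cyc, hbpair]
      ring
    rw [hq] at hp
    linarith
  have hδT : ∀ d, δ d ≠ 0 → d ∈ H.T := by
    intro d hd
    have hcov : d ∈ H.T ∪ H.L ∪ H.C := by rw [H.cover]; exact Finset.mem_univ d
    rcases Finset.mem_union.mp hcov with hc | hc
    · rcases Finset.mem_union.mp hc with hc2 | hc2
      · exact hc2
      · exfalso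
        apply hd
        obtain ⟨i, hi | hi⟩ := H.ell_cover d hc2
        · rw [hi]
          exact hδell i
        · rw [hi, hδrev, hδell]
          ring
    · exact absurd (hδC d hc) hd
  have hδ0 : ∀ d, δ d = 0 :=
    tree_rigid (rv := S.rev) (hd := S.head) (tl := S.tail) S.rev_invol S.rev_ne
      (fun d => S.tail_def d) (Fintype.card S.V) univ H.T δ hδrev hδbal
      (by rw [Finset.card_univ]) H.tree.1 (fun d _ => Finset.mem_univ _)
      (fun p q _ _ => H.tree.2.1 p q)
      (by rw [Finset.card_univ, H.tree.2.2]; omega) hδT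
  have hwhα : ∀ d, wh d = α₀ (S.right d) - α₀ (S.left d) := by
    intro d
    have h8 := hδ0 d
    rw [hδdef] at h8
    linarith
  -- walking around the cycle: all left faces have the same potential
  let nx : ℕ → ℕ := fun n => if n = N then m + 1 else n + 1
  have hnxdef : ∀ n, nx n = if n = N then m + 1 else n + 1 := fun _ => rfl
  have hnx_mem : ∀ n ∈ I, nx n ∈ I := by
    intro n hn
    have hnn := Finset.mem_Ioc.mp (hI ▸ hn)
    rw [hnxdef]
    split_ifs <;> (rw [hI, Finset.mem_Ioc]; omega)
  have htailnx : ∀ n ∈ I, S.tail (e (nx n)) = S.head (e n) := by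
    intro n hn
    rw [hetail, hehead, hnxdef]
    by_cases hN : n = N
    · rw [if_pos hN]
      have h9 := hchain m
      rw [h9, hwrap, hN]
    · rw [if_neg hN]
      exact hchain n
  have hatvertex : ∀ n ∈ I, ∀ d, S.head d = S.head (e n) → wh d ≠ 0 →
      d = e n ∨ d = S.rev (e (nx n)) := by
    intro n hn d hhd hwd
    have hnn := Finset.mem_Ioc.mp (hI ▸ hn)
    rcases hwh_char d hwd with ⟨l, hl, hle⟩ | ⟨l, hl, hle⟩
    · left
      rw [← hle]
      have h10 : aH S h (sq l) = aH S h (sq n) := by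
        rw [← hehead, ← hehead, hle, hhd, hehead]
      have hll := Finset.mem_Ioc.mp (hI ▸ hl)
      rw [hinj l n hll.1 hll.2 hnn.1 hnn.2 h10]
    · right
      rw [← hle]
      have h11 : S.tail (e l) = S.head (e n) := by
        rw [S.tail_def, hle, hhd]
      rw [hetail, hehead] at h11
      have hll := Finset.mem_Ioc.mp (hI ▸ hl)
      have h12 : aH S h (sq (l-1)) = aH S h (sq n) := by
        have h13 := hchain (l-1)
        rw [show l - 1 + 1 = l by omega] at h13
        rw [← h13]
        exact h11
      by_cases hlm : l = m + 1
      · have h14 : aH S h (sq N) = aH S h (sq n) := by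
          rw [← hwrap]
          rw [hlm] at h12
          simpa using h12
        have hnN : n = N := (hinj N n hmN le_rfl hnn.1 hnn.2 h14).symm
        rw [hnxdef, if_pos hnN, hlm]
      · have hl1 : m < l - 1 := by omega
        have h15 : l - 1 = n := hinj (l-1) n hl1 (by omega) hnn.1 hnn.2 h12
        have hnN : n ≠ N := by omega
        rw [hnxdef, if_neg hnN, show n + 1 = l by omega]
  have hfan : ∀ n ∈ I, α₀ (S.left (e n)) = α₀ (S.left (e (nx n))) :=
    fun n hn => S.fan α₀ wh hwhα (e n) (e (nx n)) (htailnx n hn)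
      (he_nrev n hn (nx n) (hnx_mem n hn)) (hatvertex n hn)
  have hconst : ∀ n, m + 1 ≤ n → n ≤ N → α₀ (S.left (e n)) = α₀ (S.left (e (m+1))) := by
    intro n
    induction n with
    | zero => intro h1 _; omega
    | succ n ihn =>
      intro h1 h2
      rcases Nat.lt_or_ge (m+1) (n+1) with hlt | hge
      · have hn1 : m + 1 ≤ n := by omega
        have hnN : n ≠ N := by omega
        have hnI : n ∈ I := by rw [hI, Finset.mem_Ioc]; omega
        have h16 := hfan n hnI
        rw [hnxdef, if_neg hnN] at h16
        rw [← h16]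
        exact ihn hn1 (by omega)
      · rw [show n + 1 = m + 1 by omega]
  have hleft : ∀ n ∈ I, α₀ (S.left (e n)) = α₀ (S.left (e (m+1))) := by
    intro n hn
    have hnn := Finset.mem_Ioc.mp (hI ▸ hn)
    exact hconst n (by omega) hnn.2
  have hright : ∀ n ∈ I, α₀ (S.right (e n)) = α₀ (S.left (e (m+1))) + 1 := by
    intro n hn
    have h17 := hwhα (e n)
    rw [hwh_e n hn] at h17
    have h18 := hleft n hn
    linarith
  -- every face value is in {a, a+1}
  have hall : ∀ p, α₀ p = α₀ (S.left (e (m+1))) ∨ α₀ p = α₀ (S.left (e (m+1))) + 1 := by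
    intro p
    have hcn := H.cotree.2.1 (S.left (e (m+1))) p
    induction hcn with
    | refl => left; rfl
    | @tail b c hab hbc ihc =>
      obtain ⟨d, _, hld, hrdd⟩ := hbc
      by_cases hwd : wh d = 0
      · have h19 := hwhα d
        rw [hwd] at h19
        have h20 : α₀ (S.right d) = α₀ (S.left d) := by linarith
        rw [← hrdd, h20, hld]
        exact ihc
      · rcases hwh_char d hwd with ⟨l, hl, hle⟩ | ⟨l, hl, hle⟩
        · right
          rw [← hrdd, ← hle]
          exact hright l hl
        · left
          rw [← hrdd, ← hle, S.right_rev]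
          exact hleft l hl
  -- the boundary edge set and its z-sum
  set E : Finset S.D := I.image e with hE
  have hEne : E.Nonempty := ⟨e (m+1), Finset.mem_image_of_mem e hmI⟩
  have hmemE : ∀ d, d ∈ E ↔ (α₀ (S.right d) = α₀ (S.left (e (m+1))) + 1
      ∧ α₀ (S.left d) = α₀ (S.left (e (m+1)))) := by
    intro d
    constructor
    · intro hd
      obtain ⟨n, hn, rfl⟩ := Finset.mem_image.mp hd
      exact ⟨hright n hn, hleft n hn⟩
    · rintro ⟨h1, h2⟩
      have hwd : wh d = 1 := by rw [hwhα, h1, h2]; ring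
      rcases hwh_char d (by rw [hwd]; norm_num) with ⟨l, hl, hle⟩ | ⟨l, hl, hle⟩
      · rw [← hle]
        exact Finset.mem_image_of_mem e hl
      · exfalso
        have h21 := hwh_rev (e l)
        rw [hwh_e l hl, hle, hwd] at h21
        linarith
  have hsumE : ∑ d ∈ E, z d = 0 := by
    set E' : Finset S.D := I.image (fun n => S.rev (e n)) with hE'
    have hdisj : Disjoint E E' := by
      rw [Finset.disjoint_left]
      intro d hd hd'
      obtain ⟨n1, hn1, hne1⟩ := Finset.mem_image.mp hd
      obtain ⟨n2, hn2, hne2⟩ := Finset.mem_image.mp hd'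
      exact he_nrev n1 hn1 n2 hn2 (by rw [hne1, ← hne2])
    have hcover : ∑ d ∈ E ∪ E', wh d * z d = ∑ d, wh d * z d := by
      apply Finset.sum_subset (Finset.subset_univ _)
      intro d _ hdn
      rw [Finset.mem_union] at hdn
      push_neg at hdn
      have h1 : ∀ n ∈ I, e n ≠ d := by
        intro n hn hc
        exact hdn.1 (by rw [← hc]; exact Finset.mem_image_of_mem e hn)
      have h2 : ∀ n ∈ I, S.rev (e n) ≠ d := by
        intro n hn hc
        exact hdn.2 (by rw [← hc]; exact Finset.mem_image_of_mem _ hn)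
      rw [hwh_zero d h1 h2]
      ring
    have hEsum : ∑ d ∈ E, wh d * z d = ∑ n ∈ I, z (e n) := by
      rw [hE, Finset.sum_image (fun a ha b hb => he_inj a ha b hb)]
      apply Finset.sum_congr rfl
      intro n hn
      rw [hwh_e n hn]
      ring
    have hrevinj : ∀ a ∈ I, ∀ b ∈ I, S.rev (e a) = S.rev (e b) → a = b := by
      intro a ha b hb hc
      exact he_inj a ha b hb (by rw [← S.rev_invol (e a), hc, S.rev_invol])
    have hE'sum : ∑ d ∈ E', wh d * z d = ∑ n ∈ I, z (e n) := by
      rw [hE', Finset.sum_image (fun a ha b hb => hrevinj a ha b hb)]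
      apply Finset.sum_congr rfl
      intro n hn
      rw [hwh_rev, hwh_e n hn, hdr.1]
      ring
    have hzsum : ∑ n ∈ I, z (e n) = 0 := by
      rw [Finset.sum_union hdisj, hEsum, hE'sum, hwh_z] at hcover
      linarith
    have hfin : ∑ d ∈ E, z d = ∑ n ∈ I, z (e n) := by
      rw [hE, Finset.sum_image (fun a ha b hb => he_inj a ha b hb)]
    rw [hfin, hzsum]
  exact drainage_contra S z r hdr α₀ (α₀ (S.left (e (m+1)))) E hEne hall hmemE hsumE

end AuxHoly3



section FinalAux

-- index evaluation lemmas for dartCostFull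
lemma dcf_zero (S : CombSurface) (H : HomologyBasis S) (z : S.D → ℝ) (c : S.D → ℝ)
    (d : S.D) : dartCostFull S H z c d 0 = c d := rfl

lemma dcf_one (S : CombSurface) (H : HomologyBasis S) (z : S.D → ℝ) (c : S.D → ℝ)
    (d : S.D) : dartCostFull S H z c d ⟨1, by omega⟩ = 1 := by
  have h1 : (⟨1, by omega⟩ : Fin (2 * S.g + 3)) = Fin.succ 0 := rfl
  rw [h1]
  rw [dartCostFull, Fin.cons_succ, Fin.cons_zero]

lemma dcf_cyc (S : CombSurface) (H : HomologyBasis S) (z : S.D → ℝ) (c : S.D → ℝ)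
    (d : S.D) (i : Fin (2 * S.g)) :
    dartCostFull S H z c d ⟨(i : ℕ) + 2, by omega⟩ = (H.cyc i d : ℝ) := by
  have h1 : (⟨(i : ℕ) + 2, by omega⟩ : Fin (2 * S.g + 3))
      = Fin.succ (Fin.succ (Fin.castSucc i)) := by
    apply Fin.ext
    simp [Fin.succ, Fin.castSucc, Fin.castAdd, Fin.castLE]
  rw [h1, dartCostFull, Fin.cons_succ, Fin.cons_succ, Fin.snoc_castSucc]

lemma dcf_z (S : CombSurface) (H : HomologyBasis S) (z : S.D → ℝ) (c : S.D → ℝ)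
    (d : S.D) : dartCostFull S H z c d ⟨2 * S.g + 2, by omega⟩ = z d := by
  have h1 : (⟨2 * S.g + 2, by omega⟩ : Fin (2 * S.g + 3))
      = Fin.succ (Fin.succ (Fin.last (2 * S.g))) := by
    apply Fin.ext
    simp [Fin.succ, Fin.last]
  rw [h1, dartCostFull, Fin.cons_succ, Fin.cons_succ, Fin.snoc_last]

lemma flowCost_apply (S : CombSurface) (H : HomologyBasis S) (z : S.D → ℝ) (c : S.D → ℝ)
    (g : S.D → ℝ) (j : Fin (2 * S.g + 3)) :
    flowCostFull S H z c g j = ∑ d, g d * dartCostFull S H z c d j := by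
  rw [flowCostFull, Finset.sum_apply]
  apply Finset.sum_congr rfl
  intro d _
  rw [Pi.smul_apply, smul_eq_mul]

end FinalAux


/-- Theorem 1 of the paper.  Let `c : darts → ℝ` be a dart cost
function, let `c'` be its lexicographic perturbation (defined from homology signatures
and a drainage `z` with sink `r`), and let `μ` and `b` be dart capacity and vertex demand
functions.  If a minimum-cost feasible flow with respect to `c'`, `μ`, and `b` exists,
then it is unique, and it is also a minimum-cost feasible flow with respect to the
unperturbed costs `c`. -/
theorem holiest_unique_flow (S : CombSurface) (H : HomologyBasis S) (z : S.D → ℝ)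
    (r : S.F) (hz : S.IsDrainage z r) (c : S.D → ℝ) (μ : S.D → ENNReal) (b : S.V → ℝ)
    (f : S.D → ℝ) (hf : IsMinCostFlow S H z c μ b f) :
    (∀ f', IsMinCostFlow S H z c μ b f' → f' = f) ∧
      (∀ f', Feasible S μ b f' → (∑ d, f d * c d) ≤ ∑ d, f' d * c d) := by
  constructor
  · intro f' hf'
    have hCeq : flowCostFull S H z c f' = flowCostFull S H z c f :=
      lexLe_antisymm' (hf'.2 f hf.1) (hf.2 f' hf'.1)
    by_contra hne0
    set h : S.D → ℝ := fun d => f' d - f d with hh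
    have hne : h ≠ 0 := by
      intro hcon
      apply hne0
      funext d
      have h2 := congrFun hcon d
      rw [hh] at h2
      simp only [Pi.zero_apply] at h2
      exact sub_eq_zero.mp h2
    have himb : ∀ v, S.imbalance h v = 0 := by
      intro v
      rw [hh, S.imbalance_sub f' f v, hf.1.2 v, hf'.1.2 v]
      ring
    have hvan : ∀ w : S.D → ℝ, (∀ d, w d ≠ 0 → h d ≠ 0) → (∀ d, |w d| ≤ 1) →
        (∀ v, S.imbalance w v = 0) →
        (∑ d, w d) = 0 ∧ (∀ i, (∑ d, w d * (H.cyc i d : ℝ)) = 0) ∧ (∑ d, w d * z d) = 0 := by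
      intro w hwsupp hwabs hwcirc
      have hsne : (univ.filter (fun d => h d ≠ 0)).Nonempty := by
        have hex : ∃ d, h d ≠ 0 := by
          by_contra hc
          push_neg at hc
          exact hne (funext hc)
        obtain ⟨d, hd⟩ := hex
        exact ⟨d, Finset.mem_filter.mpr ⟨Finset.mem_univ _, hd⟩⟩
      set ε := (univ.filter (fun d => h d ≠ 0)).inf' hsne (fun d => |h d| / 2) with hε
      have hεpos : 0 < ε := by
        rw [hε, Finset.lt_inf'_iff]
        intro d hd
        have hd2 := (Finset.mem_filter.mp hd).2
        exact div_pos (abs_pos.mpr hd2) (by norm_num)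
      have hεle : ∀ d, h d ≠ 0 → ε ≤ |h d| / 2 := by
        intro d hd
        rw [hε]
        exact Finset.inf'_le (fun d => |h d| / 2)
          (Finset.mem_filter.mpr ⟨Finset.mem_univ _, hd⟩)
      have hfeas : ∀ s : ℝ, |s| ≤ ε → Feasible S μ b (fun d => (f d + f' d)/2 + s * w d) := by
        intro s hs
        have hhd' : ∀ d, h d = f' d - f d := fun d => rfl
        constructor
        · intro d
          show (0 ≤ (f d + f' d)/2 + s * w d)
            ∧ ENNReal.ofReal ((f d + f' d)/2 + s * w d) ≤ μ d
          have hf0 := hf.1.1 d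
          have hf'0 := hf'.1.1 d
          by_cases hw0 : w d = 0
          · rw [hw0, mul_zero, add_zero]
            constructor
            · linarith [hf0.1, hf'0.1]
            · rcases le_total (f d) (f' d) with hc | hc
              · exact le_trans (ENNReal.ofReal_le_ofReal (by linarith)) hf'0.2
              · exact le_trans (ENNReal.ofReal_le_ofReal (by linarith)) hf0.2
          · have hhd : h d ≠ 0 := hwsupp d hw0
            have h1 : |s * w d| ≤ |h d| / 2 := by
              rw [abs_mul]
              calc |s| * |w d| ≤ ε * 1 :=
                    mul_le_mul hs (hwabs d) (abs_nonneg _) (le_of_lt hεpos)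
                _ = ε := mul_one ε
                _ ≤ |h d| / 2 := hεle d hhd
            have h2 := abs_le.mp h1
            rcases le_total (f d) (f' d) with hc | hc
            · have habs2 : |h d| = f' d - f d := by
                rw [hhd' d]
                exact abs_of_nonneg (by linarith)
              rw [habs2] at h2
              constructor
              · linarith [hf0.1]
              · exact le_trans (ENNReal.ofReal_le_ofReal (by linarith)) hf'0.2
            · have habs2 : |h d| = f d - f' d := by
                rw [hhd' d]
                rw [abs_of_nonpos (by linarith : f' d - f d ≤ 0)]
                ring
              rw [habs2] at h2
              constructor
              · linarith [hf'0.1]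
              · exact le_trans (ENNReal.ofReal_le_ofReal (by linarith)) hf0.2
        · intro v
          rw [S.imbalance_mix f f' w s v, hf.1.2 v, hf'.1.2 v, hwcirc v]
          ring
      have hcost : ∀ s : ℝ, flowCostFull S H z c (fun d => (f d + f' d)/2 + s * w d)
          = fun j => flowCostFull S H z c f j + s * ∑ d, w d * dartCostFull S H z c d j := by
        intro s
        funext j
        rw [flowCost_apply]
        have hsplit : ∀ d : S.D, ((f d + f' d)/2 + s * w d) * dartCostFull S H z c d j
            = (f d * dartCostFull S H z c d j)/2 + (f' d * dartCostFull S H z c d j)/2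
              + s * (w d * dartCostFull S H z c d j) := by
          intro d
          ring
        rw [Finset.sum_congr rfl (fun d _ => hsplit d), Finset.sum_add_distrib,
          Finset.sum_add_distrib, ← Finset.sum_div, ← Finset.sum_div, ← Finset.mul_sum]
        have hfc : ∑ d, f' d * dartCostFull S H z c d j
            = ∑ d, f d * dartCostFull S H z c d j := by
          rw [← flowCost_apply, ← flowCost_apply, hCeq]
        rw [hfc, ← flowCost_apply]
        ring
      have hleP := hf.2 _ (hfeas ε (by rw [abs_of_pos hεpos]))
      have hleM := hf.2 _ (hfeas (-ε) (by rw [abs_neg, abs_of_pos hεpos]))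
      rw [hcost ε] at hleP
      rw [hcost (-ε)] at hleM
      have hleM2 : lexLe (flowCostFull S H z c f)
          (fun j => flowCostFull S H z c f j
            - ε * ∑ d, w d * dartCostFull S H z c d j) := by
        have heq2 : (fun j => flowCostFull S H z c f j
              + (-ε) * ∑ d, w d * dartCostFull S H z c d j)
            = fun j => flowCostFull S H z c f j
              - ε * ∑ d, w d * dartCostFull S H z c d j := by
          funext j
          ring
        rw [heq2] at hleM
        exact hleM
      have hx0 : (fun j : Fin (2 * S.g + 3) =>
          ε * ∑ d, w d * dartCostFull S H z c d j) = 0 := lex_cancel hleP hleM2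
      have hcw : ∀ j : Fin (2 * S.g + 3), ∑ d, w d * dartCostFull S H z c d j = 0 := by
        intro j
        have h3 := congrFun hx0 j
        simp only [Pi.zero_apply] at h3
        rcases mul_eq_zero.mp h3 with hc | hc
        · exact absurd hc (ne_of_gt hεpos)
        · exact hc
      refine ⟨?_, ?_, ?_⟩
      · have h1 := hcw ⟨1, by omega⟩
        have h2 : ∑ d, w d * dartCostFull S H z c d ⟨1, by omega⟩ = ∑ d, w d :=
          Finset.sum_congr rfl (fun d _ => by rw [dcf_one, mul_one])
        rw [h2] at h1
        exact h1
      · intro i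
        have h1 := hcw ⟨(i : ℕ) + 2, by omega⟩
        have h2 : ∑ d, w d * dartCostFull S H z c d ⟨(i : ℕ) + 2, by omega⟩
            = ∑ d, w d * (H.cyc i d : ℝ) :=
          Finset.sum_congr rfl (fun d _ => by rw [dcf_cyc])
        rw [h2] at h1
        exact h1
      · have h1 := hcw ⟨2 * S.g + 2, by omega⟩
        have h2 : ∑ d, w d * dartCostFull S H z c d ⟨2 * S.g + 2, by omega⟩
            = ∑ d, w d * z d :=
          Finset.sum_congr rfl (fun d _ => by rw [dcf_z])
        rw [h2] at h1
        exact h1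
    exact no_nonzero S H z r hz h himb hvan hne
  · intro f' hfe
    have hle := hf.2 f' hfe
    have h0 := lexLe_zero_comp hle
    rw [flowCost_apply, flowCost_apply] at h0
    have hc1 : ∀ g : S.D → ℝ, ∑ d, g d * dartCostFull S H z c d 0 = ∑ d, g d * c d := by
      intro g
      apply Finset.sum_congr rfl
      intro d _
      rw [dcf_zero]
    rw [hc1, hc1] at h0
    exact h0
end
end
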